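/- arXiv:1501.03579 — 5 statements merged into one kernel-verified Lean document; each statement's English description precedes it below -/
import Mathlib

section
/- Fix 0 < η < η' with η' sufficiently small, set λ = 1/e + η and ℓ = ⌊1/η'⌋, and let N_{η'} be the number of (λ,1)-light paths of length ℓ in SMF_n. Then E[N_{η'}²] = (1 + o(1))·(E[N_{η'}])² as n → ∞, i.e., E[N_{η'}²]/(E[N_{η'}])² → 1. -/
open MeasureTheory ProbabilityTheory Real Filter

noncomputable section

/-- The total weight of the path `p = (p 0, p 1, …, p m)` (a sequence of `m+1` distinct
vertices) under edge weights `W` on the complete graph on `Fin n`. -/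
def pathWeight {n : ℕ} (W : Sym2 (Fin n) → ℝ) {m : ℕ} (p : Fin (m + 1) → Fin n) : ℝ :=
  ∑ i : Fin m, W s(p i.castSucc, p i.succ)

/-- The number of `(lam, 1)`-light paths of length `ℓ`, i.e. self-avoiding paths of length `ℓ`
whose total weight is at most `lam · ℓ − √ℓ`, for edge weights `W`. -/
def lightPathCount (n ℓ : ℕ) (lam : ℝ) (W : Sym2 (Fin n) → ℝ) : ℕ :=
  Nat.card {p : Fin (ℓ + 1) → Fin n // Function.Injective p ∧
    pathWeight W p ≤ lam * ℓ - Real.sqrt ℓ}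



namespace SMFProof
open Finset

/-! ### Exponential measure facts -/

lemma expMeasure_Iic {r : ℝ} (hr : 0 < r) (x : ℝ) :
    expMeasure r (Set.Iic x) = ENNReal.ofReal (if 0 ≤ x then 1 - Real.exp (-(r*x)) else 0) := by
  rw [expMeasure, gammaMeasure, withDensity_apply _ measurableSet_Iic]
  exact lintegral_exponentialPDF_eq_antiDeriv hr x

lemma expMeasure_Iio_zero {r : ℝ} : expMeasure r (Set.Iio 0) = 0 := by
  rw [expMeasure, gammaMeasure, withDensity_apply _ measurableSet_Iio]
  exact lintegral_exponentialPDF_of_nonpos le_rfl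

lemma expMeasure_Icc {r : ℝ} (hr : 0 < r) {x : ℝ} (hx : 0 ≤ x) :
    expMeasure r (Set.Icc 0 x) = ENNReal.ofReal (1 - Real.exp (-(r*x))) := by
  refine le_antisymm ?_ ?_
  · calc expMeasure r (Set.Icc 0 x) ≤ expMeasure r (Set.Iic x) :=
          measure_mono Set.Icc_subset_Iic_self
      _ = _ := by rw [expMeasure_Iic hr x, if_pos hx]
  · have h1 : Set.Iic x ⊆ Set.Iio 0 ∪ Set.Icc 0 x := by
      intro y hy
      rcases lt_or_ge y 0 with h | h
      · exact Or.inl h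
      · exact Or.inr ⟨h, hy⟩
    calc ENNReal.ofReal (1 - Real.exp (-(r*x))) = expMeasure r (Set.Iic x) := by
          rw [expMeasure_Iic hr x, if_pos hx]
      _ ≤ expMeasure r (Set.Iio 0 ∪ Set.Icc 0 x) := measure_mono h1
      _ ≤ expMeasure r (Set.Iio 0) + expMeasure r (Set.Icc 0 x) := measure_union_le _ _
      _ = expMeasure r (Set.Icc 0 x) := by rw [expMeasure_Iio_zero, zero_add]



section PiSpace
variable {α : Type*} [Fintype α] {μ : Measure ℝ} [IsProbabilityMeasure μ]

lemma measure_pi_biInter (S : Finset α) (sets : α → Set ℝ)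
    (H : ∀ i ∈ S, MeasurableSet (sets i)) :
    Measure.pi (fun _ : α => μ) (⋂ i ∈ S, (fun x => x i) ⁻¹' sets i)
      = ∏ i ∈ S, μ (sets i) := by
  classical
  have hset : (⋂ i ∈ S, (fun x : α → ℝ => x i) ⁻¹' sets i)
      = Set.pi Set.univ (fun i => if i ∈ S then sets i else Set.univ) := by
    ext x
    simp only [Set.mem_iInter, Set.mem_preimage, Set.mem_pi, Set.mem_univ, true_implies]
    constructor
    · intro h i
      split_ifs with hi
      · exact h i hi
      · trivial
    · intro h i hi
      have := h i
      rwa [if_pos hi] at this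
  rw [hset, Measure.pi_pi]
  have : ∀ i : α, μ (if i ∈ S then sets i else Set.univ) = if i ∈ S then μ (sets i) else 1 := by
    intro i; split_ifs <;> simp
  simp_rw [this]
  rw [Finset.prod_ite_mem, Finset.univ_inter]

lemma measure_pi_box (S : Finset α) (B : Set ℝ) (hB : MeasurableSet B) :
    Measure.pi (fun _ : α => μ) {x : α → ℝ | ∀ i ∈ S, x i ∈ B} = μ B ^ S.card := by
  have h : {x : α → ℝ | ∀ i ∈ S, x i ∈ B} = ⋂ i ∈ S, (fun x : α → ℝ => x i) ⁻¹' B := by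
    ext x; simp
  rw [h, measure_pi_biInter S (fun _ => B) (fun _ _ => hB), Finset.prod_const]

lemma iIndepFun_eval :
    iIndepFun (fun (i : α) (x : α → ℝ) => x i)
      (Measure.pi (fun _ : α => μ)) := by
  rw [iIndepFun_iff_measure_inter_preimage_eq_mul]
  intro S sets H
  rw [measure_pi_biInter S sets H]
  refine Finset.prod_congr rfl fun i hi => ?_
  have h := measure_pi_biInter (μ := μ) {i} sets (by simpa using H i hi)
  simpa using h.symm

lemma measure_pi_sum_inter_sum (S T : Finset α) (hST : Disjoint S T) (a b : ℝ) :
    Measure.pi (fun _ : α => μ) ({x | ∑ i ∈ S, x i ≤ a} ∩ {x | ∑ i ∈ T, x i ≤ b})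
      = Measure.pi (fun _ : α => μ) {x | ∑ i ∈ S, x i ≤ a}
        * Measure.pi (fun _ : α => μ) {x | ∑ i ∈ T, x i ≤ b} := by
  classical
  have h0 := (iIndepFun_eval (α := α) (μ := μ)).indepFun_finset S T hST
    (fun i => measurable_pi_apply i)
  have h1 : IndepFun (fun x : α → ℝ => ∑ i ∈ S, x i) (fun x : α → ℝ => ∑ i ∈ T, x i)
      (Measure.pi (fun _ : α => μ)) := by
    have h2 := h0.comp (φ := fun v : S → ℝ => ∑ i, v i) (ψ := fun v : T → ℝ => ∑ i, v i)
      (Finset.univ.measurable_sum (fun i _ => measurable_pi_apply i))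
      (Finset.univ.measurable_sum (fun i _ => measurable_pi_apply i))
    have e1 : ((fun v : S → ℝ => ∑ i, v i) ∘ (fun (x : α → ℝ) (i : S) => x i))
        = fun x : α → ℝ => ∑ i ∈ S, x i := by
      funext x
      simp only [Function.comp_apply]
      exact Finset.sum_coe_sort S (fun e => x e)
    have e2 : ((fun v : T → ℝ => ∑ i, v i) ∘ (fun (x : α → ℝ) (i : T) => x i))
        = fun x : α → ℝ => ∑ i ∈ T, x i := by
      funext x
      simp only [Function.comp_apply]
      exact Finset.sum_coe_sort T (fun e => x e)
    rwa [e1, e2] at h2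
  have h3 := (indepFun_iff_measure_inter_preimage_eq_mul.mp h1) (Set.Iic a) (Set.Iic b)
    measurableSet_Iic measurableSet_Iic
  exact h3

end PiSpace

open Finset

variable {n l : ℕ}

def pedges (p : Fin (l+1) → Fin n) : Finset (Sym2 (Fin n)) :=
  Finset.image (fun i : Fin l => s(p i.castSucc, p i.succ)) Finset.univ

lemma edge_inj {p : Fin (l+1) → Fin n} (hp : Function.Injective p) :
    Function.Injective (fun i : Fin l => s(p i.castSucc, p i.succ)) := by
  intro i j h
  simp only [Sym2.eq, Sym2.rel_iff', Prod.mk.injEq, Prod.swap_prod_mk] at h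
  rcases h with ⟨h1, _⟩ | ⟨h1, h2⟩
  · exact Fin.castSucc_injective _ (hp h1)
  · have a := hp h1
    have b := hp h2
    have ha : (i : ℕ) = (j : ℕ) + 1 := congrArg Fin.val a
    have hb : (i : ℕ) + 1 = (j : ℕ) := congrArg Fin.val b
    omega

lemma card_pedges {p : Fin (l+1) → Fin n} (hp : Function.Injective p) :
    (pedges p).card = l := by
  rw [pedges, Finset.card_image_of_injective _ (edge_inj hp), Finset.card_univ, Fintype.card_fin]

lemma pathWeight_eq_sum {p : Fin (l+1) → Fin n} (hp : Function.Injective p)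
    (x : Sym2 (Fin n) → ℝ) :
    pathWeight x p = ∑ e ∈ pedges p, x e := by
  rw [pedges, Finset.sum_image (fun i _ j _ h => edge_inj hp h)]
  rfl

lemma mem_pedges_endpoints {p : Fin (l+1) → Fin n} {a b : Fin n}
    (h : s(a, b) ∈ pedges p) : a ∈ Set.range p ∧ b ∈ Set.range p := by
  rw [pedges, Finset.mem_image] at h
  obtain ⟨i, _, hi⟩ := h
  rw [Sym2.eq_iff] at hi
  rcases hi with ⟨h1, h2⟩ | ⟨h1, h2⟩
  · exact ⟨⟨i.castSucc, h1⟩, ⟨i.succ, h2⟩⟩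
  · exact ⟨⟨i.succ, h2⟩, ⟨i.castSucc, h1⟩⟩

/-- Key combinatorial lemma: if `p` and `q` share `k ≥ 1` edges, then at least `k+1`
vertices of `q` lie on `p`. -/
lemma card_shared_lt_touching {p q : Fin (l+1) → Fin n}
    (hq : Function.Injective q)
    (hk : (pedges p ∩ pedges q).Nonempty) :
    (pedges p ∩ pedges q).card + 1
      ≤ (Finset.univ.filter (fun j : Fin (l+1) => q j ∈ Set.range p)).card := by
  classical
  set S : Finset (Fin l) :=
    Finset.univ.filter (fun i : Fin l => s(q i.castSucc, q i.succ) ∈ pedges p) with hS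
  have h1 : pedges p ∩ pedges q = S.image (fun i => s(q i.castSucc, q i.succ)) := by
    ext e
    simp only [Finset.mem_inter, Finset.mem_image, hS, Finset.mem_filter, Finset.mem_univ,
      true_and, pedges]
    constructor
    · rintro ⟨he, i, rfl⟩
      exact ⟨i, he, rfl⟩
    · rintro ⟨i, he, rfl⟩
      exact ⟨he, i, rfl⟩
  have hcard : (pedges p ∩ pedges q).card = S.card := by
    rw [h1, Finset.card_image_of_injective _ (edge_inj hq)]
  have hSne : S.Nonempty := by
    rcases hk with ⟨e, he⟩
    rw [h1, Finset.mem_image] at he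
    obtain ⟨i, hi, -⟩ := he
    exact ⟨i, hi⟩
  set m := S.min' hSne with hm
  have hsub : insert (Fin.castSucc m) (S.image Fin.succ)
      ⊆ Finset.univ.filter (fun j : Fin (l+1) => q j ∈ Set.range p) := by
    intro j hj
    rw [Finset.mem_insert] at hj
    simp only [Finset.mem_filter, Finset.mem_univ, true_and]
    rcases hj with rfl | hj
    · have hmS : m ∈ S := S.min'_mem hSne
      rw [hS, Finset.mem_filter] at hmS
      exact (mem_pedges_endpoints hmS.2).1
    · rw [Finset.mem_image] at hj
      obtain ⟨i, hi, rfl⟩ := hj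
      rw [hS, Finset.mem_filter] at hi
      exact (mem_pedges_endpoints hi.2).2
  have hnotmem : Fin.castSucc m ∉ S.image Fin.succ := by
    rw [Finset.mem_image]
    rintro ⟨i, hi, hie⟩
    have h1 : (i : ℕ) + 1 = (m : ℕ) := congrArg Fin.val hie
    have h2 : (m : ℕ) ≤ (i : ℕ) := S.min'_le i hi
    omega
  have hcard2 : (insert (Fin.castSucc m) (S.image Fin.succ)).card = S.card + 1 := by
    rw [Finset.card_insert_of_notMem hnotmem,
      Finset.card_image_of_injective _ (Fin.succ_injective _)]
  calc (pedges p ∩ pedges q).card + 1 = (insert (Fin.castSucc m) (S.image Fin.succ)).card := by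
        rw [hcard2, hcard]
    _ ≤ _ := Finset.card_le_card hsub

/-- The injection recording which vertices of `q` lie on `p`. -/
def phi (p q : Fin (l+1) → Fin n) (j : Fin (l+1)) : Fin (l+1) ⊕ Fin n :=
  if h : ∃ i, p i = q j then Sum.inl h.choose else Sum.inr (q j)

lemma phi_injective (p : Fin (l+1) → Fin n) :
    Function.Injective (phi (n := n) p) := by
  intro q q' h
  funext j
  have hj := congrFun h j
  by_cases h1 : ∃ i, p i = q j <;> by_cases h2 : ∃ i, p i = q' j
  · simp only [phi, dif_pos h1, dif_pos h2] at hj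
    have e1 : p h1.choose = q j := h1.choose_spec
    have e2 : p h2.choose = q' j := h2.choose_spec
    rw [← e1, ← e2]
    exact congrArg p (Sum.inl.inj hj)
  · simp only [phi, dif_pos h1, dif_neg h2] at hj
    exact absurd hj (by simp)
  · simp only [phi, dif_neg h1, dif_pos h2] at hj
    exact absurd hj (by simp)
  · simp only [phi, dif_neg h1, dif_neg h2] at hj
    exact Sum.inr.inj hj

lemma lcount_phi (p q : Fin (l+1) → Fin n) :
    (Finset.univ.filter (fun j : Fin (l+1) => (phi p q j).isLeft)).card
      = (Finset.univ.filter (fun j : Fin (l+1) => q j ∈ Set.range p)).card := by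
  congr 1
  apply Finset.filter_congr
  intro j _
  unfold phi
  constructor
  · intro hl
    split_ifs at hl with h
    · exact h
    · simp at hl
  · intro h
    rcases h with ⟨i, hi⟩
    rw [dif_pos ⟨i, hi⟩]
    rfl



variable {n l : ℕ}

def lcount (f : Fin (l+1) → Fin (l+1) ⊕ Fin n) : ℕ :=
  (Finset.univ.filter (fun j => (f j).isLeft)).card

lemma lcount_le (f : Fin (l+1) → Fin (l+1) ⊕ Fin n) : lcount f ≤ l + 1 := by
  calc lcount f ≤ Finset.univ.card := Finset.card_filter_le _ _
    _ = l + 1 := by simp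

lemma sum_pow_all (c : ℝ) (hc0 : 0 ≤ c) :
    ∑ f : Fin (l+1) → Fin (l+1) ⊕ Fin n, c ^ (2*l+1 - lcount f)
      = c^l * ((l+1 : ℝ) + n * c)^(l+1) := by
  classical
  have hterm : ∀ f : Fin (l+1) → Fin (l+1) ⊕ Fin n,
      c ^ (2*l+1 - lcount f) = c^l * ∏ j, (if (f j).isLeft then (1:ℝ) else c) := by
    intro f
    have h1 : (Finset.univ.filter (fun j => (f j).isLeft)).card
        + (Finset.univ.filter (fun j => ¬ (f j).isLeft)).card = l + 1 := by
      rw [Finset.card_filter_add_card_filter_not]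
      simp
    have h2 : 2*l+1 - lcount f = l + (Finset.univ.filter (fun j => ¬ (f j).isLeft)).card := by
      unfold lcount
      omega
    rw [h2, pow_add]
    congr 1
    rw [Finset.prod_ite, Finset.prod_const_one, Finset.prod_const, one_mul]
  simp_rw [hterm, ← Finset.mul_sum]
  congr 1
  have h3 := Finset.sum_prod_piFinset (ι := Fin (l+1)) (Finset.univ : Finset (Fin (l+1) ⊕ Fin n))
    (fun _ v => if v.isLeft then (1:ℝ) else c)
  rw [Fintype.piFinset_univ] at h3
  rw [h3]
  have h4 : ∑ v : Fin (l+1) ⊕ Fin n, (if v.isLeft then (1:ℝ) else c) = (l+1 : ℝ) + n * c := by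
    rw [Fintype.sum_sum_type]
    simp [Finset.sum_const, Finset.card_univ]
  rw [Finset.prod_const, h4]
  simp



def KK (n l : ℕ) : Finset (Fin (l+1) → Fin n) :=
  Finset.univ.filter (fun p => Function.Injective p)

lemma sharing_sum_le {p : Fin (l+1) → Fin n} (c : ℝ)
    (hc0 : 0 ≤ c) (hc1 : c ≤ 1) :
    ∑ q ∈ (KK n l).filter (fun q => ¬ Disjoint (pedges p) (pedges q)),
        c ^ (2*l - (pedges p ∩ pedges q).card)
      ≤ c^l * ((l+1 : ℝ) + n * c)^(l+1) := by
  classical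
  have hterm : ∀ q ∈ (KK n l).filter (fun q => ¬ Disjoint (pedges p) (pedges q)),
      c ^ (2*l - (pedges p ∩ pedges q).card) ≤ c ^ (2*l+1 - lcount (phi p q)) := by
    intro q hq
    rw [Finset.mem_filter] at hq
    obtain ⟨hqK, hnd⟩ := hq
    rw [KK, Finset.mem_filter] at hqK
    have hqi : Function.Injective q := hqK.2
    have hne : (pedges p ∩ pedges q).Nonempty :=
      Finset.not_disjoint_iff_nonempty_inter.mp hnd
    have hkL := card_shared_lt_touching (p := p) hqi hne
    have hL : lcount (phi p q)
        = (Finset.univ.filter (fun j : Fin (l+1) => q j ∈ Set.range p)).card :=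
      lcount_phi p q
    have hkl : (pedges p ∩ pedges q).card ≤ l := by
      calc (pedges p ∩ pedges q).card ≤ (pedges q).card :=
            Finset.card_le_card Finset.inter_subset_right
        _ = l := card_pedges hqi
    have hLle : lcount (phi p q) ≤ l + 1 := lcount_le _
    apply pow_le_pow_of_le_one hc0 hc1
    omega
  calc ∑ q ∈ (KK n l).filter (fun q => ¬ Disjoint (pedges p) (pedges q)),
        c ^ (2*l - (pedges p ∩ pedges q).card)
      ≤ ∑ q ∈ (KK n l).filter (fun q => ¬ Disjoint (pedges p) (pedges q)),
        c ^ (2*l+1 - lcount (phi p q)) := Finset.sum_le_sum hterm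
    _ = ∑ f ∈ ((KK n l).filter (fun q => ¬ Disjoint (pedges p) (pedges q))).image (phi p),
        c ^ (2*l+1 - lcount f) := by
        rw [Finset.sum_image (fun a _ b _ h => phi_injective p h)]
    _ ≤ ∑ f : Fin (l+1) → Fin (l+1) ⊕ Fin n, c ^ (2*l+1 - lcount f) := by
        apply Finset.sum_le_sum_of_subset_of_nonneg (Finset.subset_univ _)
        intro f _ _
        exact pow_nonneg hc0 _
    _ = c^l * ((l+1 : ℝ) + n * c)^(l+1) := sum_pow_all c hc0

/-! ### The canonical measure and event bounds -/

def nu (n : ℕ) : Measure (Sym2 (Fin n) → ℝ) := Measure.pi fun _ => expMeasure (1/(n:ℝ))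

lemma expProb (hn : 0 < n) : IsProbabilityMeasure (expMeasure (1/(n:ℝ))) :=
  isProbabilityMeasure_expMeasure (one_div_pos.mpr (Nat.cast_pos.mpr hn))

lemma nu_prob (hn : 0 < n) : IsProbabilityMeasure (nu n) := by
  haveI := expProb hn
  rw [nu]
  infer_instance

def Aset (n l : ℕ) (t : ℝ) (p : Fin (l+1) → Fin n) : Set (Sym2 (Fin n) → ℝ) :=
  {x | pathWeight x p ≤ t}

lemma measurable_pathWeight (p : Fin (l+1) → Fin n) :
    Measurable fun x : Sym2 (Fin n) → ℝ => pathWeight x p :=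
  Finset.measurable_sum _ (fun _ _ => measurable_pi_apply _)

lemma measurableSet_Aset (t : ℝ) (p : Fin (l+1) → Fin n) :
    MeasurableSet (Aset n l t p) :=
  measurableSet_le (measurable_pathWeight p) measurable_const

lemma nu_neg_null (hn : 0 < n) :
    nu n {x : Sym2 (Fin n) → ℝ | ¬ ∀ e, 0 ≤ x e} = 0 := by
  haveI := expProb hn
  have h : {x : Sym2 (Fin n) → ℝ | ¬ ∀ e, 0 ≤ x e} = ⋃ e, {x | ∀ i ∈ ({e} : Finset _), x i ∈ Set.Iio 0} := by
    ext x
    simp only [Set.mem_setOf_eq, Set.mem_iUnion, Finset.mem_singleton, not_forall, not_le]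
    constructor
    · rintro ⟨e, he⟩; exact ⟨e, fun i hi => hi ▸ he⟩
    · rintro ⟨e, he⟩; exact ⟨e, he e rfl⟩
  rw [h]
  apply measure_iUnion_null
  intro e
  rw [nu, measure_pi_box ({e} : Finset (Sym2 (Fin n))) _ measurableSet_Iio]
  simp [expMeasure_Iio_zero]

lemma nu_inter_le (hn : 0 < n) {t : ℝ} (ht : 0 ≤ t) {p q : Fin (l+1) → Fin n}
    (hp : Function.Injective p) (hq : Function.Injective q) :
    nu n (Aset n l t p ∩ Aset n l t q)
      ≤ expMeasure (1/(n:ℝ)) (Set.Icc 0 t) ^ ((pedges p ∪ pedges q).card) := by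
  classical
  haveI := expProb hn
  set B : Set (Sym2 (Fin n) → ℝ) := {x | ∀ e ∈ pedges p ∪ pedges q, x e ∈ Set.Icc 0 t} with hB
  set N : Set (Sym2 (Fin n) → ℝ) := {x | ¬ ∀ e, 0 ≤ x e} with hN
  have hsub : Aset n l t p ∩ Aset n l t q ⊆ B ∪ N := by
    rintro x ⟨hxp, hxq⟩
    by_cases hpos : ∀ e, 0 ≤ x e
    · left
      intro e he
      rw [Finset.mem_union] at he
      refine ⟨hpos e, ?_⟩
      rcases he with he | he
      · calc x e ≤ ∑ e' ∈ pedges p, x e' :=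
              Finset.single_le_sum (fun e' _ => hpos e') he
          _ = pathWeight x p := (pathWeight_eq_sum hp x).symm
          _ ≤ t := hxp
      · calc x e ≤ ∑ e' ∈ pedges q, x e' :=
              Finset.single_le_sum (fun e' _ => hpos e') he
          _ = pathWeight x q := (pathWeight_eq_sum hq x).symm
          _ ≤ t := hxq
    · right; exact hpos
  calc nu n (Aset n l t p ∩ Aset n l t q) ≤ nu n (B ∪ N) := measure_mono hsub
    _ ≤ nu n B + nu n N := measure_union_le _ _
    _ = nu n B := by rw [nu_neg_null hn, add_zero]
    _ = _ := by rw [hB, nu, measure_pi_box _ _ measurableSet_Icc]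

lemma nu_single_ge (hn : 0 < n) (hl : 0 < l) {t : ℝ} {p : Fin (l+1) → Fin n}
    (hp : Function.Injective p) :
    expMeasure (1/(n:ℝ)) (Set.Icc 0 (t/l)) ^ l ≤ nu n (Aset n l t p) := by
  classical
  haveI := expProb hn
  have hsub : {x : Sym2 (Fin n) → ℝ | ∀ e ∈ pedges p, x e ∈ Set.Icc 0 (t/l)}
      ⊆ Aset n l t p := by
    intro x hx
    have hws : pathWeight x p = ∑ e ∈ pedges p, x e := pathWeight_eq_sum hp x
    have hsum : ∑ e ∈ pedges p, x e ≤ (pedges p).card • (t/l) :=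
      Finset.sum_le_card_nsmul _ _ _ (fun e he => (hx e he).2)
    have : (pedges p).card • (t/l) = t := by
      rw [card_pedges hp, nsmul_eq_mul]
      field_simp
    exact le_of_le_of_eq (hws ▸ hsum) this
  calc expMeasure (1/(n:ℝ)) (Set.Icc 0 (t/l)) ^ l
      = expMeasure (1/(n:ℝ)) (Set.Icc 0 (t/l)) ^ (pedges p).card := by rw [card_pedges hp]
    _ = nu n {x : Sym2 (Fin n) → ℝ | ∀ e ∈ pedges p, x e ∈ Set.Icc 0 (t/l)} := by
        rw [nu, measure_pi_box _ _ measurableSet_Icc]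
    _ ≤ nu n (Aset n l t p) := measure_mono hsub

lemma nu_inter_eq_mul (hn : 0 < n) {t : ℝ} {p q : Fin (l+1) → Fin n}
    (hp : Function.Injective p) (hq : Function.Injective q)
    (hd : Disjoint (pedges p) (pedges q)) :
    nu n (Aset n l t p ∩ Aset n l t q) = nu n (Aset n l t p) * nu n (Aset n l t q) := by
  haveI := expProb hn
  have e1 : Aset n l t p = {x : Sym2 (Fin n) → ℝ | ∑ e ∈ pedges p, x e ≤ t} := by
    ext x; simp only [Aset, Set.mem_setOf_eq, pathWeight_eq_sum hp]
  have e2 : Aset n l t q = {x : Sym2 (Fin n) → ℝ | ∑ e ∈ pedges q, x e ≤ t} := by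
    ext x; simp only [Aset, Set.mem_setOf_eq, pathWeight_eq_sum hq]
  rw [e1, e2, nu]
  exact measure_pi_sum_inter_sum _ _ hd t t

/-! ### Real-valued probability bounds -/

lemma one_sub_exp_le {u : ℝ} (hu : 0 ≤ u) : 1 - Real.exp (-u) ≤ u := by
  have := Real.add_one_le_exp (-u); linarith

lemma half_le_one_sub_exp {u : ℝ} (h0 : 0 ≤ u) (h1 : u ≤ 1) : u/2 ≤ 1 - Real.exp (-u) := by
  have h2 : Real.exp (-u) * (1 + u) ≤ 1 := by
    have h3 : 1 + u ≤ Real.exp u := by have := Real.add_one_le_exp u; linarith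
    calc Real.exp (-u) * (1 + u) ≤ Real.exp (-u) * Real.exp u :=
          mul_le_mul_of_nonneg_left h3 (Real.exp_pos _).le
      _ = 1 := by rw [← Real.exp_add]; simp
  nlinarith [Real.exp_pos (-u), mul_nonneg h0 (sub_nonneg.mpr h1)]

lemma expIcc_toReal (hn : 0 < n) {s : ℝ} (hs : 0 ≤ s) :
    (expMeasure (1/(n:ℝ)) (Set.Icc 0 s)).toReal = 1 - Real.exp (-(s/n)) := by
  have hr : (0:ℝ) < 1/(n:ℝ) := one_div_pos.mpr (Nat.cast_pos.mpr hn)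
  rw [expMeasure_Icc hr hs]
  have h1 : (1/(n:ℝ)) * s = s/n := by ring
  rw [h1, ENNReal.toReal_ofReal]
  have : Real.exp (-(s/n)) ≤ 1 := by
    rw [Real.exp_le_one_iff]
    have : (0:ℝ) ≤ s/n := div_nonneg hs (Nat.cast_nonneg n)
    linarith
  linarith

lemma P2_le_real (hn : 0 < n) {t : ℝ} (ht : 0 ≤ t) {p q : Fin (l+1) → Fin n}
    (hp : Function.Injective p) (hq : Function.Injective q) :
    (nu n (Aset n l t p ∩ Aset n l t q)).toReal
      ≤ (t/n)^((pedges p ∪ pedges q).card) := by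
  haveI := expProb hn
  have h1 := nu_inter_le hn ht hp hq
  have hfin : expMeasure (1/(n:ℝ)) (Set.Icc 0 t) ^ ((pedges p ∪ pedges q).card) ≠ ⊤ :=
    ENNReal.pow_ne_top (measure_ne_top _ _)
  calc (nu n (Aset n l t p ∩ Aset n l t q)).toReal
      ≤ (expMeasure (1/(n:ℝ)) (Set.Icc 0 t) ^ ((pedges p ∪ pedges q).card)).toReal :=
        ENNReal.toReal_mono hfin h1
    _ = ((expMeasure (1/(n:ℝ)) (Set.Icc 0 t)).toReal)^((pedges p ∪ pedges q).card) := by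
        rw [ENNReal.toReal_pow]
    _ ≤ (t/n)^((pedges p ∪ pedges q).card) := by
        apply pow_le_pow_left₀ ENNReal.toReal_nonneg
        rw [expIcc_toReal hn ht]
        exact one_sub_exp_le (div_nonneg ht (Nat.cast_nonneg n))

lemma P1_le_real (hn : 0 < n) {t : ℝ} (ht : 0 ≤ t) {p : Fin (l+1) → Fin n}
    (hp : Function.Injective p) :
    (nu n (Aset n l t p)).toReal ≤ (t/n)^l := by
  have h := P2_le_real hn ht hp hp
  rwa [Set.inter_self, Finset.union_self, card_pedges hp] at h

lemma P1_ge_real (hn : 0 < n) (hl : 0 < l) {t : ℝ} (ht : 0 ≤ t)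
    (htl : t/(l*n) ≤ 1) {p : Fin (l+1) → Fin n} (hp : Function.Injective p) :
    (t/(2*l*n))^l ≤ (nu n (Aset n l t p)).toReal := by
  haveI := nu_prob hn
  have h1 := nu_single_ge hn hl (t := t) hp
  have h2 : (t/(2*l*n))^l ≤ ((expMeasure (1/(n:ℝ)) (Set.Icc 0 (t/l))).toReal)^l := by
    apply pow_le_pow_left₀ (by positivity)
    rw [expIcc_toReal hn (div_nonneg ht (Nat.cast_nonneg l)), div_div]
    have h3 := half_le_one_sub_exp (div_nonneg ht (by positivity)) htl
    calc t/(2*l*n) = t/(l*n)/2 := by ring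
      _ ≤ 1 - Real.exp (-(t/(l*n))) := h3
      _ = 1 - Real.exp (-(t/((l:ℝ)*n))) := rfl
  calc (t/(2*l*n))^l ≤ ((expMeasure (1/(n:ℝ)) (Set.Icc 0 (t/l))).toReal)^l := h2
    _ = (expMeasure (1/(n:ℝ)) (Set.Icc 0 (t/l)) ^ l).toReal := by rw [ENNReal.toReal_pow]
    _ ≤ (nu n (Aset n l t p)).toReal :=
        ENNReal.toReal_mono (measure_ne_top _ _) h1

lemma P2_eq_mul_real (hn : 0 < n) {t : ℝ} {p q : Fin (l+1) → Fin n}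
    (hp : Function.Injective p) (hq : Function.Injective q)
    (hd : Disjoint (pedges p) (pedges q)) :
    (nu n (Aset n l t p ∩ Aset n l t q)).toReal
      = (nu n (Aset n l t p)).toReal * (nu n (Aset n l t q)).toReal := by
  rw [nu_inter_eq_mul hn hp hq hd, ENNReal.toReal_mul]

/-! ### Integral identities -/

lemma count_cast (lam : ℝ) (x : Sym2 (Fin n) → ℝ) :
    ((lightPathCount n l lam x : ℝ))
      = ∑ p ∈ KK n l, (Aset n l (lam*l - Real.sqrt l) p).indicator (fun _ => (1:ℝ)) x := by
  classical
  rw [lightPathCount, Nat.card_eq_fintype_card, Fintype.card_subtype]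
  have h1 : Finset.univ.filter
      (fun p : Fin (l+1) → Fin n => Function.Injective p ∧ pathWeight x p ≤ lam*l - Real.sqrt l)
      = (KK n l).filter (fun p => pathWeight x p ≤ lam*l - Real.sqrt l) := by
    rw [KK, Finset.filter_filter]
  rw [h1, Finset.card_filter]
  push_cast
  refine Finset.sum_congr rfl fun p _ => ?_
  rw [Set.indicator_apply]
  by_cases h : pathWeight x p ≤ lam*l - Real.sqrt l
  · simp [Aset, Set.mem_setOf_eq, h]
  · simp [Aset, Set.mem_setOf_eq, h]

lemma integral_sum_ind (hn : 0 < n) (t : ℝ) :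
    ∫ x, (∑ p ∈ KK n l, (Aset n l t p).indicator (fun _ => (1:ℝ)) x) ∂(nu n)
      = ∑ p ∈ KK n l, (nu n (Aset n l t p)).toReal := by
  haveI := nu_prob hn
  rw [integral_finset_sum _
    (fun p _ => (integrable_const (1:ℝ)).indicator (measurableSet_Aset t p))]
  refine Finset.sum_congr rfl fun p _ => ?_
  rw [integral_indicator_const (1:ℝ) (measurableSet_Aset t p), smul_eq_mul, mul_one, measureReal_def]

lemma integral_sum_ind_sq (hn : 0 < n) (t : ℝ) :
    ∫ x, (∑ p ∈ KK n l, (Aset n l t p).indicator (fun _ => (1:ℝ)) x)^2 ∂(nu n)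
      = ∑ p ∈ KK n l, ∑ q ∈ KK n l, (nu n (Aset n l t p ∩ Aset n l t q)).toReal := by
  haveI := nu_prob hn
  have hgsq : ∀ x : Sym2 (Fin n) → ℝ,
      (∑ p ∈ KK n l, (Aset n l t p).indicator (fun _ => (1:ℝ)) x)^2
        = ∑ p ∈ KK n l, ∑ q ∈ KK n l,
            (Aset n l t p ∩ Aset n l t q).indicator (fun _ => (1:ℝ)) x := by
    intro x
    rw [sq, Finset.sum_mul_sum]
    refine Finset.sum_congr rfl fun p _ => Finset.sum_congr rfl fun q _ => ?_
    by_cases hp : x ∈ Aset n l t p <;> by_cases hq : x ∈ Aset n l t q <;>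
      simp [Set.indicator_apply, hp, hq, Set.mem_inter_iff]
  have h0 : ∫ x, (∑ p ∈ KK n l, (Aset n l t p).indicator (fun _ => (1:ℝ)) x)^2 ∂(nu n)
      = ∫ x, (∑ p ∈ KK n l, ∑ q ∈ KK n l,
          (Aset n l t p ∩ Aset n l t q).indicator (fun _ => (1:ℝ)) x) ∂(nu n) := by
    congr 1; funext x; exact hgsq x
  rw [h0]
  rw [integral_finset_sum _ (fun p _ => integrable_finset_sum _
    (fun q _ => (integrable_const (1:ℝ)).indicator
      ((measurableSet_Aset t p).inter (measurableSet_Aset t q))))]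
  refine Finset.sum_congr rfl fun p _ => ?_
  rw [integral_finset_sum _
    (fun q _ => (integrable_const (1:ℝ)).indicator
      ((measurableSet_Aset t p).inter (measurableSet_Aset t q)))]
  refine Finset.sum_congr rfl fun q _ => ?_
  rw [integral_indicator_const (1:ℝ)
    ((measurableSet_Aset t p).inter (measurableSet_Aset t q)), smul_eq_mul, mul_one, measureReal_def]

/-! ### Transfer to the canonical space -/

lemma W_aemeasurable (hn : 0 < n) {Ω : Type*} [MeasurableSpace Ω] (P : Measure Ω)
    (W : Sym2 (Fin n) → Ω → ℝ)
    (hmap : ∀ e, Measure.map (W e) P = expMeasure (1/(n:ℝ))) :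
    ∀ e, AEMeasurable (W e) P := by
  intro e
  by_contra hna
  have h0 := Measure.map_of_not_aemeasurable hna
  rw [hmap e] at h0
  haveI := expProb hn
  have h1 := measure_univ (μ := expMeasure (1/(n:ℝ)))
  rw [h0] at h1
  simp at h1

lemma joint_aemeasurable (hn : 0 < n) {Ω : Type*} [MeasurableSpace Ω] (P : Measure Ω)
    (W : Sym2 (Fin n) → Ω → ℝ)
    (hmap : ∀ e, Measure.map (W e) P = expMeasure (1/(n:ℝ))) :
    AEMeasurable (fun ω e => W e ω) P := by
  have hWae := W_aemeasurable hn P W hmap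
  refine ⟨fun ω e => (hWae e).mk (W e) ω,
    measurable_pi_lambda _ (fun e => (hWae e).measurable_mk), ?_⟩
  have hae : ∀ᵐ ω ∂P, ∀ e, W e ω = (hWae e).mk (W e) ω :=
    (MeasureTheory.ae_all_iff).mpr fun e => (hWae e).ae_eq_mk
  filter_upwards [hae] with ω h
  funext e
  exact h e

lemma map_joint_eq (hn : 0 < n) {Ω : Type*} [MeasurableSpace Ω] (P : Measure Ω)
    [IsProbabilityMeasure P] (W : Sym2 (Fin n) → Ω → ℝ)
    (hind : iIndepFun W P)
    (hmap : ∀ e, Measure.map (W e) P = expMeasure (1/(n:ℝ))) :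
    Measure.map (fun ω e => W e ω) P = nu n := by
  haveI := expProb hn
  have hWae := W_aemeasurable hn P W hmap
  have hjae := joint_aemeasurable hn P W hmap
  rw [nu]
  refine (Measure.pi_eq ?_).symm
  intro s hs
  rw [Measure.map_apply_of_aemeasurable hjae (MeasurableSet.univ_pi hs)]
  have hpre : (fun ω e => W e ω) ⁻¹' (Set.pi Set.univ s)
      = ⋂ e ∈ (Finset.univ : Finset (Sym2 (Fin n))), W e ⁻¹' s e := by
    ext ω; simp [Set.mem_pi]
  rw [hpre, hind.measure_inter_preimage_eq_mul Finset.univ (fun i _ => hs i)]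
  refine Finset.prod_congr rfl fun e _ => ?_
  rw [← hmap e, Measure.map_apply_of_aemeasurable (hWae e) (hs e)]

lemma integral_transfer (hn : 0 < n) {Ω : Type*} [MeasurableSpace Ω] (P : Measure Ω)
    [IsProbabilityMeasure P] (W : Sym2 (Fin n) → Ω → ℝ)
    (hind : iIndepFun W P)
    (hmap : ∀ e, Measure.map (W e) P = expMeasure (1/(n:ℝ)))
    (g : (Sym2 (Fin n) → ℝ) → ℝ) (hg : Measurable g) :
    ∫ ω, g (fun e => W e ω) ∂P = ∫ x, g x ∂(nu n) := by
  have hj := map_joint_eq hn P W hind hmap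
  have hjae := joint_aemeasurable hn P W hmap
  rw [← hj, integral_map hjae hg.aestronglyMeasurable]


variable {n l : ℕ}
/-! ### Main estimates -/

def EN (n l : ℕ) (t : ℝ) : ℝ := ∑ p ∈ KK n l, (nu n (Aset n l t p)).toReal

def EN2 (n l : ℕ) (t : ℝ) : ℝ :=
  ∑ p ∈ KK n l, ∑ q ∈ KK n l, (nu n (Aset n l t p ∩ Aset n l t q)).toReal

lemma mem_KK {p : Fin (l+1) → Fin n} (hp : p ∈ KK n l) : Function.Injective p := by
  rw [KK, Finset.mem_filter] at hp; exact hp.2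

lemma card_KK_le : ((KK n l).card : ℝ) ≤ (n:ℝ)^(l+1) := by
  have h1 : (KK n l).card ≤ Fintype.card (Fin (l+1) → Fin n) :=
    le_trans (Finset.card_filter_le _ _) (le_of_eq (Finset.card_univ))
  have h2 : Fintype.card (Fin (l+1) → Fin n) = n^(l+1) := by
    rw [Fintype.card_fun, Fintype.card_fin, Fintype.card_fin]
  calc ((KK n l).card : ℝ) ≤ ((n^(l+1) : ℕ) : ℝ) := by exact_mod_cast h2 ▸ h1
    _ = (n:ℝ)^(l+1) := by push_cast; ring

lemma card_KK_ge (hln : l ≤ n) : ((n:ℝ) - l)^(l+1) ≤ ((KK n l).card : ℝ) := by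
  classical
  have h1 : (KK n l).card = Fintype.card {p : Fin (l+1) → Fin n // Function.Injective p} := by
    rw [Fintype.card_subtype, KK]
  have h2 : Fintype.card {p : Fin (l+1) → Fin n // Function.Injective p}
      = Fintype.card (Fin (l+1) ↪ Fin n) :=
    Fintype.card_congr (Equiv.subtypeInjectiveEquivEmbedding (Fin (l+1)) (Fin n))
  have h3 : Fintype.card (Fin (l+1) ↪ Fin n) = n.descFactorial (l+1) := by
    rw [Fintype.card_embedding_eq, Fintype.card_fin, Fintype.card_fin]
  have h4 : (n - l)^(l+1) ≤ n.descFactorial (l+1) := by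
    have := Nat.pow_sub_le_descFactorial n (l+1)
    simpa using this
  have h5 : (((n - l)^(l+1) : ℕ) : ℝ) ≤ ((KK n l).card : ℝ) := by
    rw [h1, h2, h3]; exact_mod_cast h4
  calc ((n:ℝ) - l)^(l+1) = (((n - l : ℕ)) : ℝ)^(l+1) := by
        rw [Nat.cast_sub hln]
    _ = (((n - l)^(l+1) : ℕ) : ℝ) := by push_cast; ring
    _ ≤ _ := h5

lemma EN_sq_expand (n l : ℕ) (t : ℝ) :
    (EN n l t)^2 = ∑ p ∈ KK n l, ∑ q ∈ KK n l,
      (nu n (Aset n l t p)).toReal * (nu n (Aset n l t q)).toReal := by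
  rw [EN, sq, Finset.sum_mul_sum]

lemma diff_bound (hn : 0 < n) (hl : 0 < l) {t : ℝ} (ht : 0 ≤ t) (htn : t ≤ n) :
    |EN2 n l t - (EN n l t)^2| ≤ ((l+1:ℝ) + t)^(l+1) * t^l * n := by
  classical
  have hn0 : (0:ℝ) < n := Nat.cast_pos.mpr hn
  have hc0 : (0:ℝ) ≤ t/n := div_nonneg ht hn0.le
  have hc1 : t/(n:ℝ) ≤ 1 := (div_le_one hn0).mpr htn
  rw [EN_sq_expand, EN2, ← Finset.sum_sub_distrib]
  simp_rw [← Finset.sum_sub_distrib]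
  -- bound inner sums path by path
  have hinner : ∀ p ∈ KK n l,
      |∑ q ∈ KK n l, ((nu n (Aset n l t p ∩ Aset n l t q)).toReal
          - (nu n (Aset n l t p)).toReal * (nu n (Aset n l t q)).toReal)|
        ≤ (t/n)^l * ((l+1:ℝ) + n * (t/n))^(l+1) := by
    intro p hp
    have hpi := mem_KK hp
    have hzero : ∀ q ∈ KK n l,
        q ∉ (KK n l).filter (fun q => ¬ Disjoint (pedges p) (pedges q)) →
        ((nu n (Aset n l t p ∩ Aset n l t q)).toReal
          - (nu n (Aset n l t p)).toReal * (nu n (Aset n l t q)).toReal) = 0 := by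
      intro q hq hqn
      rw [Finset.mem_filter, not_and, not_not] at hqn
      have hd := hqn hq
      rw [P2_eq_mul_real hn hpi (mem_KK hq) hd, sub_self]
    have hsum_eq : ∑ q ∈ KK n l, ((nu n (Aset n l t p ∩ Aset n l t q)).toReal
          - (nu n (Aset n l t p)).toReal * (nu n (Aset n l t q)).toReal)
        = ∑ q ∈ (KK n l).filter (fun q => ¬ Disjoint (pedges p) (pedges q)),
            ((nu n (Aset n l t p ∩ Aset n l t q)).toReal
          - (nu n (Aset n l t p)).toReal * (nu n (Aset n l t q)).toReal) :=
      (Finset.sum_subset (Finset.filter_subset _ _) hzero).symm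
    rw [hsum_eq]
    calc |∑ q ∈ (KK n l).filter (fun q => ¬ Disjoint (pedges p) (pedges q)),
            ((nu n (Aset n l t p ∩ Aset n l t q)).toReal
          - (nu n (Aset n l t p)).toReal * (nu n (Aset n l t q)).toReal)|
        ≤ ∑ q ∈ (KK n l).filter (fun q => ¬ Disjoint (pedges p) (pedges q)),
            |(nu n (Aset n l t p ∩ Aset n l t q)).toReal
          - (nu n (Aset n l t p)).toReal * (nu n (Aset n l t q)).toReal| :=
          Finset.abs_sum_le_sum_abs _ _
      _ ≤ ∑ q ∈ (KK n l).filter (fun q => ¬ Disjoint (pedges p) (pedges q)),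
            (t/(n:ℝ))^(2*l - (pedges p ∩ pedges q).card) := by
          apply Finset.sum_le_sum
          intro q hq
          rw [Finset.mem_filter] at hq
          have hqi := mem_KK hq.1
          have hk : (pedges p ∩ pedges q).card ≤ l := by
            calc (pedges p ∩ pedges q).card ≤ (pedges q).card :=
                  Finset.card_le_card Finset.inter_subset_right
              _ = l := card_pedges hqi
          have hcu : (pedges p ∪ pedges q).card = 2*l - (pedges p ∩ pedges q).card := by
            have := Finset.card_union_add_card_inter (pedges p) (pedges q)
            rw [card_pedges hpi, card_pedges hqi] at this
            omega
          have hb1 : (nu n (Aset n l t p ∩ Aset n l t q)).toReal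
              ≤ (t/(n:ℝ))^(2*l - (pedges p ∩ pedges q).card) := by
            rw [← hcu]; exact P2_le_real hn ht hpi hqi
          have hb2 : (nu n (Aset n l t p)).toReal * (nu n (Aset n l t q)).toReal
              ≤ (t/(n:ℝ))^(2*l - (pedges p ∩ pedges q).card) := by
            calc (nu n (Aset n l t p)).toReal * (nu n (Aset n l t q)).toReal
                ≤ (t/(n:ℝ))^l * (t/(n:ℝ))^l := by
                  apply mul_le_mul (P1_le_real hn ht hpi) (P1_le_real hn ht hqi)
                    ENNReal.toReal_nonneg (pow_nonneg hc0 _)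
              _ = (t/(n:ℝ))^(2*l) := by rw [← pow_add]; congr 1; omega
              _ ≤ (t/(n:ℝ))^(2*l - (pedges p ∩ pedges q).card) :=
                  pow_le_pow_of_le_one hc0 hc1 (by omega)
          rw [abs_sub_le_iff]
          constructor
          · have := mul_nonneg (ENNReal.toReal_nonneg
              (a := nu n (Aset n l t p))) (ENNReal.toReal_nonneg (a := nu n (Aset n l t q)))
            linarith
          · have := ENNReal.toReal_nonneg (a := nu n (Aset n l t p ∩ Aset n l t q))
            linarith
      _ ≤ (t/(n:ℝ))^l * ((l+1:ℝ) + n * (t/n))^(l+1) :=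
          sharing_sum_le (t/(n:ℝ)) hc0 hc1
  have houter : |∑ p ∈ KK n l, ∑ q ∈ KK n l,
      ((nu n (Aset n l t p ∩ Aset n l t q)).toReal
        - (nu n (Aset n l t p)).toReal * (nu n (Aset n l t q)).toReal)|
      ≤ ((KK n l).card : ℝ) * ((t/n)^l * ((l+1:ℝ) + n * (t/n))^(l+1)) := by
    calc |∑ p ∈ KK n l, ∑ q ∈ KK n l, _| ≤ ∑ p ∈ KK n l, |∑ q ∈ KK n l,
        ((nu n (Aset n l t p ∩ Aset n l t q)).toReal
          - (nu n (Aset n l t p)).toReal * (nu n (Aset n l t q)).toReal)| :=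
          Finset.abs_sum_le_sum_abs _ _
      _ ≤ ∑ p ∈ KK n l, (t/(n:ℝ))^l * ((l+1:ℝ) + n * (t/n))^(l+1) :=
          Finset.sum_le_sum hinner
      _ = ((KK n l).card : ℝ) * ((t/n)^l * ((l+1:ℝ) + n * (t/n))^(l+1)) := by
          rw [Finset.sum_const, nsmul_eq_mul]
  have hnt : (n:ℝ) * (t/n) = t := mul_div_cancel₀ t hn0.ne'
  rw [hnt] at houter
  calc |∑ p ∈ KK n l, ∑ q ∈ KK n l,
      ((nu n (Aset n l t p ∩ Aset n l t q)).toReal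
        - (nu n (Aset n l t p)).toReal * (nu n (Aset n l t q)).toReal)|
      ≤ ((KK n l).card : ℝ) * ((t/n)^l * ((l+1:ℝ) + t)^(l+1)) := houter
    _ ≤ (n:ℝ)^(l+1) * ((t/n)^l * ((l+1:ℝ) + t)^(l+1)) := by
        apply mul_le_mul_of_nonneg_right card_KK_le
        apply mul_nonneg (pow_nonneg hc0 _)
        apply pow_nonneg
        positivity
    _ = ((l+1:ℝ) + t)^(l+1) * t^l * n := by
        rw [div_pow]
        field_simp
        ring

lemma EN_lower (hl : 0 < l) (hn2 : 2*l ≤ n) {t : ℝ} (ht : 0 ≤ t) (htn : t ≤ n) :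
    (n:ℝ) * (t/(2*l))^l / 2^(l+1) ≤ EN n l t := by
  have hn : 0 < n := by omega
  have hn0 : (0:ℝ) < n := Nat.cast_pos.mpr hn
  have hl0 : (0:ℝ) < l := Nat.cast_pos.mpr hl
  have htl : t/((l:ℝ)*n) ≤ 1 := by
    rw [div_le_one (by positivity)]
    calc t ≤ n := htn
      _ = 1 * (n:ℝ) := (one_mul _).symm
      _ ≤ (l:ℝ) * n := by
        apply mul_le_mul_of_nonneg_right _ hn0.le
        exact_mod_cast hl
    -- t ≤ l * n
  have hstep : ∀ p ∈ KK n l, (t/(2*l*n))^l ≤ (nu n (Aset n l t p)).toReal :=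
    fun p hp => P1_ge_real hn hl ht htl (mem_KK hp)
  have h1 : ((KK n l).card : ℝ) * (t/(2*l*n))^l ≤ EN n l t := by
    rw [EN]
    calc ((KK n l).card : ℝ) * (t/(2*l*n))^l
        = (KK n l).card • (t/(2*(l:ℝ)*n))^l := by rw [nsmul_eq_mul]
      _ ≤ ∑ p ∈ KK n l, (nu n (Aset n l t p)).toReal :=
        Finset.card_nsmul_le_sum _ _ _ hstep
  have h2 : ((n:ℝ)/2)^(l+1) * (t/(2*l*n))^l ≤ ((KK n l).card : ℝ) * (t/(2*l*n))^l := by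
    apply mul_le_mul_of_nonneg_right _ (by positivity)
    calc ((n:ℝ)/2)^(l+1) ≤ ((n:ℝ) - l)^(l+1) := by
          apply pow_le_pow_left₀ (by positivity)
          have : (l:ℝ) ≤ (n:ℝ)/2 := by
            have : (2*l : ℕ) ≤ n := hn2
            have h := Nat.cast_le (α := ℝ).mpr this
            push_cast at h
            linarith
          linarith
      _ ≤ ((KK n l).card : ℝ) := card_KK_ge (by omega)
  have h3 : ((n:ℝ)/2)^(l+1) * (t/(2*l*n))^l = (n:ℝ) * (t/(2*l))^l / 2^(l+1) := by
    rw [div_pow, div_pow, div_pow, pow_succ]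
    rw [mul_pow, mul_pow]
    field_simp
  linarith

end SMFProof

open SMFProof


/-- **Second moment of the number of short `(λ,1)`-light paths.**
There is an absolute constant `η₀ > 0` such that for all `0 < η < η' < η₀`, with
`λ = 1/e + η`, `ℓ = ⌊1/η'⌋` and `N_{η'}` the number of `(λ,1)`-light paths of length `ℓ`
in the stochastic mean-field model, one has `E[N_{η'}²] = (1 + o(1))·(E[N_{η'}])²` as
`n → ∞`, i.e. `E[N_{η'}²]/(E[N_{η'}])² → 1`. -/
theorem second_moment_light_paths :
    ∃ η₀ : ℝ, 0 < η₀ ∧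
      ∀ η η' : ℝ, 0 < η → η < η' → η' < η₀ →
      ∀ (Ω : ℕ → Type) (mΩ : ∀ n, MeasurableSpace (Ω n)) (P : ∀ n, Measure (Ω n)),
        (∀ n, IsProbabilityMeasure (P n)) →
      ∀ W : ∀ n, Sym2 (Fin n) → Ω n → ℝ,
        (∀ n, iIndepFun (W n) (P n)) →
        (∀ n e, Measure.map (W n e) (P n) = expMeasure (1 / n)) →
      Tendsto
        (fun n =>
          (∫ ω, ((lightPathCount n ⌊1 / η'⌋₊ (1 / Real.exp 1 + η)
              (fun e => W n e ω) : ℝ)) ^ 2 ∂(P n)) /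
          (∫ ω, (lightPathCount n ⌊1 / η'⌋₊ (1 / Real.exp 1 + η)
              (fun e => W n e ω) : ℝ) ∂(P n)) ^ 2)
        atTop (nhds 1) := by
  
  refine ⟨1/8, by norm_num, ?_⟩
  intro η η' hη hηη' hη'lt Ω mΩ P hP W hind hmap
  set l := ⌊1/η'⌋₊ with hldef
  set lam := 1/Real.exp 1 + η with hlamdef
  set t := lam * l - Real.sqrt l with htdef
  have hη' : 0 < η' := lt_trans hη hηη'
  have hl8 : 8 ≤ l := by
    apply Nat.le_floor
    rw [le_div_iff₀ hη']
    push_cast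
    linarith
  have hl : 0 < l := by omega
  have hl0 : (0:ℝ) < l := by exact_mod_cast hl
  have hl8' : (8:ℝ) ≤ l := by exact_mod_cast hl8
  have hsqrt8 : Real.exp 1 ≤ Real.sqrt l := by
    have h1 : Real.exp 1 ≤ 2.72 := by
      have := Real.exp_one_lt_d9; linarith
    have h2 : (2.72:ℝ) ≤ Real.sqrt 8 := by
      nlinarith [Real.sq_sqrt (show (0:ℝ) ≤ 8 by norm_num), Real.sqrt_nonneg (8:ℝ)]
    have h3 : Real.sqrt 8 ≤ Real.sqrt l := Real.sqrt_le_sqrt hl8'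
    linarith
  have hsql : Real.sqrt l * Real.sqrt l = (l:ℝ) := Real.mul_self_sqrt hl0.le
  have hsl : Real.sqrt (l:ℝ) * Real.exp 1 ≤ (l:ℝ) := by
    nlinarith [Real.sqrt_nonneg (l:ℝ)]
  have ht : 0 < t := by
    have h5 : Real.sqrt (l:ℝ) ≤ (l:ℝ) / Real.exp 1 :=
      (le_div_iff₀ (Real.exp_pos 1)).mpr hsl
    have h6 : (1/Real.exp 1 + η) * (l:ℝ) = (l:ℝ)/Real.exp 1 + η*(l:ℝ) := by
      field_simp
    have hηl : 0 < η * (l:ℝ) := mul_pos hη hl0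
    rw [htdef, hlamdef, h6]
    linarith
  set cs := (t/(2*(l:ℝ)))^l / 2^(l+1) with hcsdef
  have hcs0 : 0 < cs := by rw [hcsdef]; positivity
  set Cb := ((l+1:ℝ)+t)^(l+1) * t^l with hCbdef
  have hCb0 : 0 < Cb := by rw [hCbdef]; positivity
  set C := Cb/cs^2 with hCdef
  rw [tendsto_iff_dist_tendsto_zero]
  apply squeeze_zero' (Filter.Eventually.of_forall fun n => dist_nonneg) ?_
    (tendsto_const_div_atTop_nhds_zero_nat C)
  filter_upwards [eventually_ge_atTop (max (2*l) ⌈t⌉₊)] with m hm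
  have hm2l : 2*l ≤ m := le_trans (le_max_left _ _) hm
  have hmt : t ≤ (m:ℝ) := by
    calc t ≤ (⌈t⌉₊ : ℝ) := Nat.le_ceil t
      _ ≤ (m:ℝ) := by exact_mod_cast le_trans (le_max_right _ _) hm
  have hm0 : 0 < m := by omega
  have hm0' : (0:ℝ) < m := Nat.cast_pos.mpr hm0
  haveI : IsProbabilityMeasure (P m) := hP m
  have hg : Measurable (fun x : Sym2 (Fin m) → ℝ =>
      ∑ p ∈ KK m l, (Aset m l t p).indicator (fun _ => (1:ℝ)) x) :=
    Finset.measurable_sum _ (fun p _ => measurable_const.indicator (measurableSet_Aset t p))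
  have hE1 : ∫ ω, ((lightPathCount m l lam (fun e => W m e ω)):ℝ) ∂(P m) = EN m l t := by
    have h1 : ∫ ω, ((lightPathCount m l lam (fun e => W m e ω)):ℝ) ∂(P m)
        = ∫ ω, (fun x : Sym2 (Fin m) → ℝ =>
            ∑ p ∈ KK m l, (Aset m l t p).indicator (fun _ => (1:ℝ)) x)
            (fun e => W m e ω) ∂(P m) := by
      congr 1
      funext ω
      exact count_cast lam _
    rw [h1, integral_transfer hm0 (P m) (W m) (hind m) (fun e => hmap m e) _ hg,
      integral_sum_ind hm0 t, EN]
  have hE2 : ∫ ω, (((lightPathCount m l lam (fun e => W m e ω)):ℝ))^2 ∂(P m)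
      = EN2 m l t := by
    have h1 : ∫ ω, (((lightPathCount m l lam (fun e => W m e ω)):ℝ))^2 ∂(P m)
        = ∫ ω, (fun x : Sym2 (Fin m) → ℝ =>
            (∑ p ∈ KK m l, (Aset m l t p).indicator (fun _ => (1:ℝ)) x)^2)
            (fun e => W m e ω) ∂(P m) := by
      congr 1
      funext ω
      rw [count_cast lam _]
    rw [h1, integral_transfer hm0 (P m) (W m) (hind m) (fun e => hmap m e) _ (hg.pow_const 2),
      integral_sum_ind_sq hm0 t, EN2]
  rw [Real.dist_eq, hE1, hE2]
  have hEN_lb : (m:ℝ) * cs ≤ EN m l t := by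
    have := EN_lower hl hm2l ht.le hmt
    rw [hcsdef, ← mul_div_assoc]
    exact this
  have hENpos : 0 < EN m l t := lt_of_lt_of_le (by positivity) hEN_lb
  have hEN2pos : (0:ℝ) < (EN m l t)^2 := by positivity
  have hdiff : |EN2 m l t - (EN m l t)^2| ≤ Cb * m := by
    have := diff_bound hm0 hl ht.le hmt
    rw [hCbdef]
    calc |EN2 m l t - (EN m l t)^2| ≤ ((l+1:ℝ) + t)^(l+1) * t^l * m := this
      _ = ((l+1:ℝ)+t)^(l+1) * t^l * m := by ring
  have heq : EN2 m l t / (EN m l t)^2 - 1 = (EN2 m l t - (EN m l t)^2)/(EN m l t)^2 := by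
    field_simp
  rw [heq, abs_div, abs_of_pos hEN2pos]
  have hsq_lb : ((m:ℝ) * cs)^2 ≤ (EN m l t)^2 :=
    pow_le_pow_left₀ (by positivity) hEN_lb 2
  calc |EN2 m l t - (EN m l t)^2| / (EN m l t)^2
      ≤ (Cb * m) / (((m:ℝ) * cs)^2) :=
        div_le_div₀ (by positivity) hdiff (by positivity) hsq_lb
    _ = C / m := by
        rw [hCdef]
        field_simp
end
end

section
/- Fix 0 < η < η' with η' sufficiently small, set λ = 1/e + η and ℓ = ⌊1/η'⌋, and let N_{η'} be the number of (λ,1)-light paths of length ℓ in SMF_n. Then P(N_{η'} ≥ 2·E[N_{η'}]) → 0 as n → ∞. -/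
open MeasureTheory ProbabilityTheory Real Filter

noncomputable section

namespace LightPathAux
open Finset Function

variable {n ℓ : ℕ}

def edgeOf (p : Fin (ℓ + 1) → Fin n) (i : Fin ℓ) : Sym2 (Fin n) := s(p i.castSucc, p i.succ)

def edges (p : Fin (ℓ + 1) → Fin n) : Finset (Sym2 (Fin n)) := Finset.univ.image (edgeOf p)

lemma edge_injective {p : Fin (ℓ + 1) → Fin n} (hp : Function.Injective p) :
    Function.Injective (edgeOf p) := by
  intro i j h
  rw [edgeOf, edgeOf, Sym2.eq_iff] at h
  rcases h with ⟨h1, h2⟩ | ⟨h1, h2⟩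
  · exact Fin.castSucc_injective _ (hp h1)
  · have e1 : i.castSucc = j.succ := hp h1
    have e2 : i.succ = j.castSucc := hp h2
    have v1 : (i : ℕ) = (j : ℕ) + 1 := by
      have := congrArg Fin.val e1; simpa using this
    have v2 : (i : ℕ) + 1 = (j : ℕ) := by
      have := congrArg Fin.val e2; simpa using this
    omega

lemma card_edges {p : Fin (ℓ + 1) → Fin n} (hp : Function.Injective p) :
    (edges p).card = ℓ := by
  rw [edges, Finset.card_image_of_injective _ (edge_injective hp), card_univ, Fintype.card_fin]

lemma pathWeight_eq_sum_edges {p : Fin (ℓ + 1) → Fin n} (hp : Function.Injective p)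
    (W : Sym2 (Fin n) → ℝ) : pathWeight W p = ∑ e ∈ edges p, W e := by
  rw [edges, Finset.sum_image (fun i _ j _ h => edge_injective hp h)]
  rfl

lemma mem_verts_of_edge_mem {p q : Fin (ℓ + 1) → Fin n} {i : Fin ℓ}
    (h : edgeOf q i ∈ edges p) :
    q i.castSucc ∈ Finset.univ.image p ∧ q i.succ ∈ Finset.univ.image p := by
  rw [edges, Finset.mem_image] at h
  obtain ⟨j, -, hj⟩ := h
  rw [edgeOf, edgeOf, Sym2.eq_iff] at hj
  rcases hj with ⟨h1, h2⟩ | ⟨h1, h2⟩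
  · exact ⟨Finset.mem_image.2 ⟨_, Finset.mem_univ _, h1⟩,
      Finset.mem_image.2 ⟨_, Finset.mem_univ _, h2⟩⟩
  · exact ⟨Finset.mem_image.2 ⟨_, Finset.mem_univ _, h2⟩,
      Finset.mem_image.2 ⟨_, Finset.mem_univ _, h1⟩⟩

/-- Counting functions with constrained values on a set of coordinates. -/
lemma card_filter_forall_mem [DecidableEq (Fin n)] (I : Finset (Fin (ℓ + 1))) (V : Finset (Fin n)) :
    (Finset.univ.filter (fun q : Fin (ℓ + 1) → Fin n => ∀ j ∈ I, q j ∈ V)).card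
      ≤ V.card ^ I.card * n ^ (ℓ + 1 - I.card) := by
  classical
  rw [← Fintype.card_subtype]
  have hcard : Fintype.card (({j // j ∈ I} → {v // v ∈ V}) × ({j // j ∈ Iᶜ} → Fin n))
      = V.card ^ I.card * n ^ (ℓ + 1 - I.card) := by
    rw [Fintype.card_prod, Fintype.card_fun, Fintype.card_fun]
    simp [Fintype.card_coe, Finset.card_compl]
  rw [← hcard]
  apply Fintype.card_le_of_injective
    (fun q => (fun j => ⟨q.1 j.1, q.2 j.1 j.2⟩, fun j => q.1 j.1))
  intro q q' h
  have h1 := congrArg Prod.fst h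
  have h2 := congrArg Prod.snd h
  simp only at h1 h2
  ext1
  funext j
  by_cases hj : j ∈ I
  · exact congrArg Subtype.val (congrFun h1 ⟨j, hj⟩)
  · exact congrFun h2 ⟨j, by simpa using hj⟩

/-- `k` distinct edges of a path span at least `k+1` vertices (as index sets). -/
lemma card_indexSet {T : Finset (Fin ℓ)} (hT : T.Nonempty) :
    T.card + 1 ≤ (T.image Fin.castSucc ∪ T.image Fin.succ).card := by
  classical
  set M := T.max' hT with hM
  have hMem : M ∈ T := T.max'_mem hT
  have h1 : T.image Fin.castSucc ∪ {M.succ} ⊆ T.image Fin.castSucc ∪ T.image Fin.succ := by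
    apply Finset.union_subset_union_right
    simp only [Finset.singleton_subset_iff, Finset.mem_image]
    exact ⟨M, hMem, rfl⟩
  refine le_trans ?_ (Finset.card_le_card h1)
  rw [Finset.union_comm, Finset.card_union_of_disjoint, Finset.card_singleton,
    Finset.card_image_of_injective _ (Fin.castSucc_injective _)]
  · omega
  · simp only [Finset.disjoint_singleton_left, Finset.mem_image, not_exists]
    intro j hj
    obtain ⟨hjT, h⟩ := hj
    have hv := congrArg Fin.val h
    have hjM : j ≤ M := T.le_max' j hjT
    have hv' : (j : ℕ) = (M : ℕ) + 1 := by simpa using hv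
    have := Fin.le_def.mp hjM
    omega

end LightPathAux

namespace LightPathAux2
open Finset Function
open LightPathAux

variable {n ℓ : ℕ}

lemma inter_card_eq {p q : Fin (ℓ + 1) → Fin n} (hq : Function.Injective q) :
    (edges p ∩ edges q).card
      = (Finset.univ.filter (fun i : Fin ℓ => edgeOf q i ∈ edges p)).card := by
  classical
  have himg : (Finset.univ.filter (fun i : Fin ℓ => edgeOf q i ∈ edges p)).image (edgeOf q)
      = edges p ∩ edges q := by
    ext e
    simp only [Finset.mem_image, Finset.mem_filter, Finset.mem_inter, Finset.mem_univ, true_and,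
      edges]
    constructor
    · rintro ⟨i, hi, rfl⟩
      exact ⟨hi, ⟨i, rfl⟩⟩
    · rintro ⟨he, he'⟩
      obtain ⟨i, rfl⟩ := he'
      exact ⟨i, he, rfl⟩
  rw [← himg, Finset.card_image_of_injective _ (edge_injective hq)]

/-- The key counting estimate: the sum over paths `q` sharing an edge with `p`,
weighted by `(1/n) ^ (2ℓ - #shared edges)`, is at most `C(ℓ) / n^ℓ`. -/
lemma sum_sharing_bound (hn : 1 ≤ n) {p : Fin (ℓ + 1) → Fin n} :
    ∑ q ∈ (Finset.univ.filter (fun q : Fin (ℓ + 1) → Fin n => Function.Injective q)).filter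
        (fun q => ¬ Disjoint (edges p) (edges q)),
      ((1 : ℝ)/n) ^ (2*ℓ - (edges p ∩ edges q).card)
      ≤ (2^ℓ * (ℓ+1)^(ℓ+1) : ℝ) * ((1:ℝ)/n)^ℓ := by
  classical
  set x : ℝ := (1:ℝ)/n with hx
  have hx0 : 0 ≤ x := by positivity
  have hnR : (n:ℝ) ≠ 0 := by
    have : (0:ℝ) < n := by exact_mod_cast hn.trans_lt' (by norm_num)
    exact this.ne'
  set s := (Finset.univ.filter (fun q : Fin (ℓ + 1) → Fin n => Function.Injective q)).filter
      (fun q => ¬ Disjoint (edges p) (edges q)) with hs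
  set Tfun : (Fin (ℓ + 1) → Fin n) → Finset (Fin ℓ) :=
    fun q => Finset.univ.filter (fun i : Fin ℓ => edgeOf q i ∈ edges p) with hT
  rw [← Finset.sum_fiberwise_of_maps_to (g := Tfun) (t := Finset.univ)
    (fun q _ => Finset.mem_univ _)]
  have hinner : ∀ T : Finset (Fin ℓ),
      ∑ q ∈ s.filter (fun q => Tfun q = T), x ^ (2*ℓ - (edges p ∩ edges q).card)
        ≤ ((ℓ+1:ℝ))^(ℓ+1) * x^ℓ := by
    intro T
    rcases T.eq_empty_or_nonempty with rfl | hTne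
    · have : s.filter (fun q => Tfun q = ∅) = ∅ := by
        rw [Finset.filter_eq_empty_iff]
        intro q hq
        rw [hs, Finset.mem_filter] at hq
        obtain ⟨-, hnd⟩ := hq
        obtain ⟨e, hep, heq⟩ := Finset.not_disjoint_iff.1 hnd
        rw [edges, Finset.mem_image] at heq
        obtain ⟨i, -, rfl⟩ := heq
        intro hTe
        have : i ∈ Tfun q := Finset.mem_filter.2 ⟨Finset.mem_univ _, hep⟩
        rw [hTe] at this
        exact absurd this (Finset.notMem_empty _)
      rw [this, Finset.sum_empty]
      positivity
    · -- each q in the fiber has (edges p ∩ edges q).card = T.card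
      have hcongr : ∀ q ∈ s.filter (fun q => Tfun q = T),
          x ^ (2*ℓ - (edges p ∩ edges q).card) = x ^ (2*ℓ - T.card) := by
        intro q hq
        rw [Finset.mem_filter] at hq
        obtain ⟨hq1, hq2⟩ := hq
        rw [hs, Finset.mem_filter, Finset.mem_filter] at hq1
        rw [inter_card_eq hq1.1.2,
          show Finset.univ.filter (fun i : Fin ℓ => edgeOf q i ∈ edges p) = T from hq2]
      rw [Finset.sum_congr rfl hcongr, Finset.sum_const, nsmul_eq_mul]
      -- bound the fiber cardinality
      set I : Finset (Fin (ℓ+1)) := T.image Fin.castSucc ∪ T.image Fin.succ with hI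
      set V : Finset (Fin n) := Finset.univ.image p with hV
      have hsub : s.filter (fun q => Tfun q = T)
          ⊆ Finset.univ.filter (fun q : Fin (ℓ + 1) → Fin n => ∀ j ∈ I, q j ∈ V) := by
        intro q hq
        rw [Finset.mem_filter] at hq
        obtain ⟨-, hq2⟩ := hq
        refine Finset.mem_filter.2 ⟨Finset.mem_univ _, ?_⟩
        intro j hj
        rw [hI, Finset.mem_union, Finset.mem_image, Finset.mem_image] at hj
        rcases hj with ⟨i, hi, rfl⟩ | ⟨i, hi, rfl⟩
        · rw [← hq2] at hi
          have := Finset.mem_filter.1 hi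
          exact (mem_verts_of_edge_mem this.2).1
        · rw [← hq2] at hi
          have := Finset.mem_filter.1 hi
          exact (mem_verts_of_edge_mem this.2).2
      have hIcard : T.card + 1 ≤ I.card := card_indexSet hTne
      have hTcard : T.card ≤ ℓ := by
        have := T.card_le_univ
        simpa using this
      have hcard : (s.filter (fun q => Tfun q = T)).card ≤ (ℓ+1)^(ℓ+1) * n^(ℓ - T.card) := by
        refine (Finset.card_le_card hsub).trans ?_
        refine (card_filter_forall_mem I V).trans ?_
        have h1 : V.card ^ I.card ≤ (ℓ+1)^(ℓ+1) := by
          have hV1 : V.card ≤ ℓ+1 := by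
            refine (Finset.card_image_le).trans ?_
            simp
          have hI1 : I.card ≤ ℓ+1 := by
            have := I.card_le_univ
            simpa using this
          calc V.card ^ I.card ≤ (ℓ+1) ^ I.card := Nat.pow_le_pow_left hV1 _
            _ ≤ (ℓ+1)^(ℓ+1) := Nat.pow_le_pow_right (by omega) hI1
        have h2 : n ^ (ℓ + 1 - I.card) ≤ n ^ (ℓ - T.card) :=
          Nat.pow_le_pow_right hn (by omega)
        exact Nat.mul_le_mul h1 h2
      have hxpow : (n:ℝ)^(ℓ - T.card) * x ^ (2*ℓ - T.card) = x^ℓ := by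
        have h2T : 2*ℓ - T.card = (ℓ - T.card) + ℓ := by omega
        rw [h2T, pow_add, ← mul_assoc, ← mul_pow]
        rw [hx]
        field_simp
        exact one_pow _
      calc ((s.filter (fun q => Tfun q = T)).card : ℝ) * x ^ (2*ℓ - T.card)
          ≤ ((ℓ+1)^(ℓ+1) * n^(ℓ - T.card) : ℕ) * x ^ (2*ℓ - T.card) := by
            apply mul_le_mul_of_nonneg_right _ (by positivity)
            exact_mod_cast hcard
        _ = ((ℓ+1:ℝ))^(ℓ+1) * ((n:ℝ)^(ℓ - T.card) * x ^ (2*ℓ - T.card)) := by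
            push_cast; ring
        _ = ((ℓ+1:ℝ))^(ℓ+1) * x^ℓ := by rw [hxpow]
  calc ∑ T ∈ Finset.univ, ∑ q ∈ s.filter (fun q => Tfun q = T),
        x ^ (2*ℓ - (edges p ∩ edges q).card)
      ≤ ∑ T ∈ (Finset.univ : Finset (Finset (Fin ℓ))), ((ℓ+1:ℝ))^(ℓ+1) * x^ℓ :=
        Finset.sum_le_sum (fun T _ => hinner T)
    _ = (2^ℓ * (ℓ+1)^(ℓ+1) : ℝ) * x^ℓ := by
        rw [Finset.sum_const, nsmul_eq_mul, Finset.card_univ, Fintype.card_finset,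
          Fintype.card_fin]
        push_cast; ring

end LightPathAux2

namespace LightProb
open Finset Function
open LightPathAux LightPathAux2

lemma expMeasure_Iic {r : ℝ} (hr : 0 < r) {t : ℝ} (ht : 0 ≤ t) :
    expMeasure r (Set.Iic t) = ENNReal.ofReal (1 - rexp (-(r*t))) := by
  rw [expMeasure, gammaMeasure, withDensity_apply _ measurableSet_Iic]
  have h := lintegral_exponentialPDF_eq_antiDeriv hr t
  rw [show (gammaPDF 1 r) = exponentialPDF r from rfl] at *
  rw [h, if_pos ht]

lemma expMeasure_Iio_zero (r : ℝ) : expMeasure r (Set.Iio 0) = 0 := by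
  rw [expMeasure, gammaMeasure, withDensity_apply _ measurableSet_Iio]
  exact lintegral_gammaPDF_of_nonpos le_rfl

lemma one_sub_exp_le {y : ℝ} (hy : 0 ≤ y) : 1 - rexp (-y) ≤ y := by
  have := Real.add_one_le_exp (-y)
  linarith

lemma third_le_one_sub_exp {y : ℝ} (hy : 0 ≤ y) (hy1 : y ≤ 1) : y/3 ≤ 1 - rexp (-y) := by
  have h1 : rexp (-y) * (rexp y - 1) = 1 - rexp (-y) := by
    have : rexp (-y) * rexp y = 1 := by rw [← Real.exp_add]; simp
    nlinarith [this]
  have h2 : y ≤ rexp y - 1 := by have := Real.add_one_le_exp y; linarith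
  have h3 : rexp (-1) ≤ rexp (-y) := Real.exp_le_exp.2 (by linarith)
  have h4 : (1:ℝ)/3 ≤ rexp (-1) := by
    rw [Real.exp_neg, le_inv_comm₀ (by norm_num) (Real.exp_pos 1)]
    have := Real.exp_one_lt_d9
    linarith
  nlinarith [Real.exp_pos (-y)]

end LightProb

namespace LightProb
open Finset Function
open LightPathAux LightPathAux2

variable {n ℓ : ℕ} {Ω : Type} [MeasurableSpace Ω] {P : Measure Ω} [IsProbabilityMeasure P]
  {W : Sym2 (Fin n) → Ω → ℝ} {c : ℝ}

/-- Event that path `p` is `c`-light. -/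
def A (W : Sym2 (Fin n) → Ω → ℝ) (c : ℝ) (p : Fin (ℓ + 1) → Fin n) : Set Ω :=
  {ω | pathWeight (fun e => W e ω) p ≤ c}

lemma measurable_X (hW : ∀ e, Measurable (W e)) (p : Fin (ℓ + 1) → Fin n) :
    Measurable (fun ω => pathWeight (fun e => W e ω) p) := by
  unfold pathWeight
  exact Finset.measurable_sum _ (fun i _ => hW _)

lemma measurableSet_A (hW : ∀ e, Measurable (W e)) (p : Fin (ℓ + 1) → Fin n) :
    MeasurableSet (A W c p) :=
  measurable_X hW p measurableSet_Iic

lemma single_prob (hW : ∀ e, Measurable (W e))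
    (hlaw : ∀ e, Measure.map (W e) P = expMeasure (1/n)) (hn : 1 ≤ n)
    (e : Sym2 (Fin n)) {t : ℝ} (ht : 0 ≤ t) :
    P (W e ⁻¹' Set.Iic t) = ENNReal.ofReal (1 - rexp (-(1/n * t))) := by
  have hr : (0:ℝ) < 1/n := by positivity
  rw [← Measure.map_apply (hW e) measurableSet_Iic, hlaw e, expMeasure_Iic hr ht]

lemma prod_prob (hW : ∀ e, Measurable (W e))
    (hind : iIndepFun W P)
    (S : Finset (Sym2 (Fin n))) (t : ℝ) :
    P (⋂ e ∈ S, W e ⁻¹' Set.Iic t) = ∏ e ∈ S, P (W e ⁻¹' Set.Iic t) :=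
  hind.meas_biInter (fun e _ => ⟨Set.Iic t, measurableSet_Iic, rfl⟩)

lemma indep_pair (hW : ∀ e, Measurable (W e))
    (hind : iIndepFun W P)
    {p q : Fin (ℓ + 1) → Fin n} (hp : Function.Injective p) (hq : Function.Injective q)
    (hdisj : Disjoint (edges p) (edges q)) :
    P (A W c p ∩ A W c q) = P (A W c p) * P (A W c q) := by
  classical
  set Xp : Ω → ℝ := fun ω => ∑ e ∈ edges p, W e ω with hXp
  set Xq : Ω → ℝ := fun ω => ∑ e ∈ edges q, W e ω with hXq
  have hAp : A W c p = Xp ⁻¹' Set.Iic c := by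
    ext ω; simp only [A, Set.mem_setOf_eq, Set.mem_preimage, Set.mem_Iic, hXp,
      pathWeight_eq_sum_edges hp]
  have hAq : A W c q = Xq ⁻¹' Set.Iic c := by
    ext ω; simp only [A, Set.mem_setOf_eq, Set.mem_preimage, Set.mem_Iic, hXq,
      pathWeight_eq_sum_edges hq]
  have hsum : ∀ S : Finset (Sym2 (Fin n)),
      Measurable (fun v : {x // x ∈ S} → ℝ => ∑ i, v i) :=
    fun S => Finset.measurable_sum _ (fun i _ => measurable_pi_apply i)
  have hIndep : IndepFun Xp Xq P := by
    have h := (hind.indepFun_finset (edges p) (edges q) hdisj hW).comp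
      (hsum (edges p)) (hsum (edges q))
    have e1 : (fun v : {x // x ∈ edges p} → ℝ => ∑ i, v i) ∘
        (fun a (i : {x // x ∈ edges p}) => W i a) = Xp := by
      funext a
      simp only [Function.comp_apply, hXp]
      exact Finset.sum_coe_sort (edges p) (fun e => W e a)
    have e2 : (fun v : {x // x ∈ edges q} → ℝ => ∑ i, v i) ∘
        (fun a (i : {x // x ∈ edges q}) => W i a) = Xq := by
      funext a
      simp only [Function.comp_apply, hXq]
      exact Finset.sum_coe_sort (edges q) (fun e => W e a)
    rwa [e1, e2] at h
  rw [hAp, hAq]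
  exact hIndep.measure_inter_preimage_eq_mul _ _ measurableSet_Iic measurableSet_Iic

lemma nonneg_ae (hW : ∀ e, Measurable (W e))
    (hlaw : ∀ e, Measure.map (W e) P = expMeasure (1/n)) :
    P {ω | ¬ ∀ e : Sym2 (Fin n), 0 ≤ W e ω} = 0 := by
  have h : {ω | ¬ ∀ e : Sym2 (Fin n), 0 ≤ W e ω} ⊆ ⋃ e : Sym2 (Fin n), W e ⁻¹' Set.Iio 0 := by
    intro ω hω
    rw [Set.mem_setOf_eq, not_forall] at hω
    obtain ⟨e, he⟩ := hω
    exact Set.mem_iUnion.2 ⟨e, by simpa [Set.mem_preimage, Set.mem_Iio] using not_le.1 he⟩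
  refine measure_mono_null h (measure_iUnion_null (fun e => ?_))
  rw [← Measure.map_apply (hW e) measurableSet_Iio, hlaw e]
  exact expMeasure_Iio_zero _

lemma pair_upper (hW : ∀ e, Measurable (W e))
    (hind : iIndepFun W P)
    (hlaw : ∀ e, Measure.map (W e) P = expMeasure (1/n)) (hn : 1 ≤ n) (hc : 0 ≤ c)
    (p q : Fin (ℓ + 1) → Fin n) :
    P (A W c p ∩ A W c q)
      ≤ ENNReal.ofReal ((1/n * c) ^ (edges p ∪ edges q).card) := by
  classical
  have hsub : A W c p ∩ A W c q ⊆
      (⋂ e ∈ edges p ∪ edges q, W e ⁻¹' Set.Iic c) ∪ {ω | ¬ ∀ e : Sym2 (Fin n), 0 ≤ W e ω} := by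
    intro ω hω
    by_cases hg : ∀ e : Sym2 (Fin n), 0 ≤ W e ω
    · refine Set.mem_union_left _ ?_
      simp only [Set.mem_iInter, Set.mem_preimage, Set.mem_Iic]
      intro e he
      rw [Finset.mem_union] at he
      have key : ∀ p' : Fin (ℓ + 1) → Fin n, ω ∈ A W c p' → e ∈ edges p' → W e ω ≤ c := by
        intro p' hω' he'
        rw [edges, Finset.mem_image] at he'
        obtain ⟨i, -, rfl⟩ := he'
        have hle : W (edgeOf p' i) ω ≤ ∑ j : Fin ℓ, W (edgeOf p' j) ω :=
          Finset.single_le_sum (fun j _ => hg _) (Finset.mem_univ i)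
        exact hle.trans hω'
      rcases he with he | he
      · exact key p hω.1 he
      · exact key q hω.2 he
    · exact Set.mem_union_right _ hg
  calc P (A W c p ∩ A W c q)
      ≤ P ((⋂ e ∈ edges p ∪ edges q, W e ⁻¹' Set.Iic c)
          ∪ {ω | ¬ ∀ e : Sym2 (Fin n), 0 ≤ W e ω}) := measure_mono hsub
    _ ≤ P (⋂ e ∈ edges p ∪ edges q, W e ⁻¹' Set.Iic c)
          + P {ω | ¬ ∀ e : Sym2 (Fin n), 0 ≤ W e ω} := measure_union_le _ _
    _ = P (⋂ e ∈ edges p ∪ edges q, W e ⁻¹' Set.Iic c) := by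
        rw [nonneg_ae hW hlaw, add_zero]
    _ = ∏ e ∈ edges p ∪ edges q, P (W e ⁻¹' Set.Iic c) := prod_prob hW hind _ c
    _ ≤ ENNReal.ofReal ((1/n * c) ^ (edges p ∪ edges q).card) := by
        rw [ENNReal.ofReal_pow (by positivity), ← Finset.prod_const]
        refine Finset.prod_le_prod' (fun e _ => ?_)
        rw [single_prob hW hlaw hn e hc]
        exact ENNReal.ofReal_le_ofReal (one_sub_exp_le (by positivity))

lemma single_lower (hW : ∀ e, Measurable (W e))
    (hind : iIndepFun W P)
    (hlaw : ∀ e, Measure.map (W e) P = expMeasure (1/n)) (hn : 1 ≤ n) (hl : 1 ≤ ℓ)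
    (hc : 0 < c) (hcl : c ≤ ℓ)
    {p : Fin (ℓ + 1) → Fin n} (hp : Function.Injective p) :
    ENNReal.ofReal ((1/n * (c/ℓ)/3) ^ ℓ) ≤ P (A W c p) := by
  classical
  have hl0 : (0:ℝ) < ℓ := by exact_mod_cast hl
  have hn0 : (0:ℝ) < n := by exact_mod_cast hn
  have hsub : (⋂ e ∈ edges p, W e ⁻¹' Set.Iic (c/ℓ)) ⊆ A W c p := by
    intro ω hω
    simp only [Set.mem_iInter, Set.mem_preimage, Set.mem_Iic] at hω
    show pathWeight (fun e => W e ω) p ≤ c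
    rw [pathWeight_eq_sum_edges hp]
    calc ∑ e ∈ edges p, W e ω ≤ ∑ _e ∈ edges p, c/ℓ :=
          Finset.sum_le_sum (fun e he => hω e he)
      _ = c := by
          rw [Finset.sum_const, card_edges hp, nsmul_eq_mul]
          field_simp
  refine le_trans ?_ (measure_mono hsub)
  rw [prod_prob hW hind _ _]
  have hone : ∀ e ∈ edges p, ENNReal.ofReal (1/n * (c/ℓ)/3) ≤ P (W e ⁻¹' Set.Iic (c/ℓ)) := by
    intro e _
    rw [single_prob hW hlaw hn e (by positivity)]
    apply ENNReal.ofReal_le_ofReal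
    have harg : 1/(n:ℝ) * (c/ℓ) ≤ 1 := by
      have h1 : 1/(n:ℝ) ≤ 1 := by
        rw [div_le_one hn0]; exact_mod_cast hn
      have h2 : c/(ℓ:ℝ) ≤ 1 := by rw [div_le_one hl0]; exact hcl
      calc 1/(n:ℝ) * (c/ℓ) ≤ 1 * 1 := by
            apply mul_le_mul h1 h2 (by positivity) (by norm_num)
        _ = 1 := by norm_num
    have := third_le_one_sub_exp (y := 1/n * (c/ℓ)) (by positivity) harg
    linarith
  calc ENNReal.ofReal ((1/n * (c/ℓ)/3) ^ ℓ)
      = ∏ _e ∈ edges p, ENNReal.ofReal (1/n * (c/ℓ)/3) := by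
        rw [Finset.prod_const, card_edges hp, ← ENNReal.ofReal_pow (by positivity)]
    _ ≤ ∏ e ∈ edges p, P (W e ⁻¹' Set.Iic (c/ℓ)) := Finset.prod_le_prod' hone



theorem core_bound {ℓ : ℕ} (hl : 1 ≤ ℓ) {c lam : ℝ} (hc : 0 < c) (hcl : c ≤ (ℓ:ℝ))
    (hlamc : lam * ℓ - Real.sqrt ℓ = c) :
    ∃ C : ℝ, 0 < C ∧ ∀ n : ℕ, 2*ℓ + 2 ≤ n →
    ∀ (Ω : Type) (mΩ : MeasurableSpace Ω) (P : Measure Ω) (_ : IsProbabilityMeasure P),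
    ∀ W : Sym2 (Fin n) → Ω → ℝ, (∀ e, Measurable (W e)) →
    iIndepFun W P →
    (∀ e, Measure.map (W e) P = expMeasure (1/n)) →
    P {ω | 2 * ∫ ω', (lightPathCount n ℓ lam (fun e => W e ω') : ℝ) ∂P
        ≤ (lightPathCount n ℓ lam (fun e => W e ω) : ℝ)} ≤ ENNReal.ofReal (C / n) := by
  classical
  have hl0 : (0:ℝ) < ℓ := by exact_mod_cast hl
  set b : ℝ := max c 1 with hb
  have hb1 : (1:ℝ) ≤ b := le_max_right _ _
  have hcb : c ≤ b := le_max_left _ _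
  set C₂ : ℝ := 2^ℓ * (ℓ+1)^(ℓ+1) with hC₂
  have hC₂pos : 0 < C₂ := by positivity
  set c₀ : ℝ := (c/(3*ℓ))^ℓ / 2^(ℓ+1) with hc₀
  have hc₀pos : 0 < c₀ := by positivity
  set Cvar : ℝ := b^(2*ℓ) * C₂ with hCvar
  have hCvarpos : 0 < Cvar := by positivity
  refine ⟨Cvar / c₀^2, by positivity, ?_⟩
  intro n hn Ω mΩ P hP W hW hind hlaw
  have hn1 : 1 ≤ n := by omega
  have hn0 : (0:ℝ) < n := by exact_mod_cast hn1
  set cnt : Ω → ℝ := fun ω => (lightPathCount n ℓ lam (fun e => W e ω) : ℝ) with hcnt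
  set Pinj : Finset (Fin (ℓ+1) → Fin n) :=
    Finset.univ.filter (fun p => Function.Injective p) with hPinj
  -- counting function as a sum of indicators
  have hNf : ∀ ω : Ω, cnt ω = ∑ p ∈ Pinj, Set.indicator (A W c p) (fun _ => (1:ℝ)) ω := by
    intro ω
    rw [hcnt]
    simp only
    rw [lightPathCount, Nat.card_eq_fintype_card, Fintype.card_subtype]
    have hset : Finset.univ.filter (fun p : Fin (ℓ+1) → Fin n =>
        Function.Injective p ∧ pathWeight (fun e => W e ω) p ≤ lam * ℓ - Real.sqrt ℓ)
        = Pinj.filter (fun p => ω ∈ A W c p) := by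
      rw [hPinj, Finset.filter_filter]
      apply Finset.filter_congr
      intro p _
      simp [A, hlamc]
    rw [hset, Finset.card_filter]
    push_cast
    simp [Set.indicator_apply]
  have hAmeas : ∀ p : Fin (ℓ+1) → Fin n, MeasurableSet (A W c p) :=
    fun p => measurableSet_A hW p
  have hMem : MeasureTheory.MemLp cnt 2 P := by
    have : cnt = fun ω => ∑ p ∈ Pinj, Set.indicator (A W c p) (fun _ => (1:ℝ)) ω :=
      funext hNf
    rw [this]
    exact memLp_finset_sum Pinj (fun p _ =>
      memLp_indicator_const 2 (hAmeas p) 1 (Or.inr (measure_ne_top _ _)))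
  set E : ℝ := ∫ ω', cnt ω' ∂P with hE
  have hint : ∀ p : Fin (ℓ+1) → Fin n,
      MeasureTheory.Integrable (Set.indicator (A W c p) (fun _ => (1:ℝ))) P :=
    fun p => (integrable_const (1:ℝ)).indicator (hAmeas p)
  have hEeq : E = ∑ p ∈ Pinj, (P (A W c p)).toReal := by
    rw [hE, integral_congr_ae (Filter.EventuallyEq.of_eq (funext hNf)),
      integral_finset_sum _ (fun p _ => hint p)]
    refine Finset.sum_congr rfl (fun p _ => ?_)
    rw [integral_indicator_const (1:ℝ) (hAmeas p), smul_eq_mul, mul_one, measureReal_def]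
  -- second moment
  have hintpair : ∀ z : (Fin (ℓ+1) → Fin n) × (Fin (ℓ+1) → Fin n),
      MeasureTheory.Integrable (Set.indicator (A W c z.1 ∩ A W c z.2) (fun _ => (1:ℝ))) P :=
    fun z => (integrable_const (1:ℝ)).indicator ((hAmeas z.1).inter (hAmeas z.2))
  have hsq : ∀ ω : Ω, cnt ω ^ 2 = ∑ z ∈ Pinj ×ˢ Pinj,
      Set.indicator (A W c z.1 ∩ A W c z.2) (fun _ => (1:ℝ)) ω := by
    intro ω
    rw [Finset.sum_product, hNf ω, sq, Finset.sum_mul_sum]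
    refine Finset.sum_congr rfl (fun p _ => Finset.sum_congr rfl (fun q _ => ?_))
    by_cases h1 : ω ∈ A W c p <;> by_cases h2 : ω ∈ A W c q <;>
      simp [Set.indicator_apply, h1, h2, Set.mem_inter_iff]
  have hEsq : ∫ ω, cnt ω ^ 2 ∂P
      = ∑ z ∈ Pinj ×ˢ Pinj, (P (A W c z.1 ∩ A W c z.2)).toReal := by
    rw [integral_congr_ae (Filter.EventuallyEq.of_eq (funext hsq)),
      integral_finset_sum _ (fun z _ => hintpair z)]
    refine Finset.sum_congr rfl (fun z _ => ?_)
    rw [integral_indicator_const (1:ℝ) ((hAmeas z.1).inter (hAmeas z.2)), smul_eq_mul, mul_one,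
      measureReal_def]
  have hVareq : variance cnt P = ∑ z ∈ Pinj ×ˢ Pinj,
      ((P (A W c z.1 ∩ A W c z.2)).toReal
        - (P (A W c z.1)).toReal * (P (A W c z.2)).toReal) := by
    rw [variance_eq_sub hMem, Finset.sum_sub_distrib]
    have hgoal2 : (∫ x, (cnt ^ 2) x ∂P : ℝ)
        = ∑ z ∈ Pinj ×ˢ Pinj, (P (A W c z.1 ∩ A W c z.2)).toReal := hEsq
    rw [hgoal2]
    congr 1
    · have hprod2 : ∑ z ∈ Pinj ×ˢ Pinj, (P (A W c z.1)).toReal * (P (A W c z.2)).toReal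
          = (∑ p ∈ Pinj, (P (A W c p)).toReal) * (∑ q ∈ Pinj, (P (A W c q)).toReal) := by
        rw [Finset.sum_product,
          ← Finset.sum_mul_sum Pinj Pinj (fun p => (P (A W c p)).toReal)
            (fun q => (P (A W c q)).toReal)]
      rw [hprod2, ← hEeq, ← hE, sq]
  -- variance bound
  have hterm : ∀ z ∈ Pinj ×ˢ Pinj,
      (P (A W c z.1 ∩ A W c z.2)).toReal
        - (P (A W c z.1)).toReal * (P (A W c z.2)).toReal
      ≤ b^(2*ℓ) * (if ¬ Disjoint (edges z.1) (edges z.2) then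
          ((1:ℝ)/n) ^ (2*ℓ - (edges z.1 ∩ edges z.2).card) else 0) := by
    rintro ⟨p, q⟩ hz
    rw [Finset.mem_product, hPinj, Finset.mem_filter, Finset.mem_filter] at hz
    obtain ⟨⟨-, hp⟩, ⟨-, hq⟩⟩ := hz
    by_cases hd : Disjoint (edges p) (edges q)
    · rw [if_neg (not_not_intro hd), mul_zero, indep_pair hW hind hp hq hd,
        ENNReal.toReal_mul]
      simp
    · rw [if_pos hd]
      have h1 : (P (A W c p ∩ A W c q)).toReal
          ≤ (1/(n:ℝ) * c) ^ (edges p ∪ edges q).card := by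
        have := pair_upper hW hind hlaw hn1 hc.le p q
        calc (P (A W c p ∩ A W c q)).toReal
            ≤ (ENNReal.ofReal ((1/(n:ℝ) * c) ^ (edges p ∪ edges q).card)).toReal :=
              ENNReal.toReal_mono ENNReal.ofReal_ne_top this
          _ = (1/(n:ℝ) * c) ^ (edges p ∪ edges q).card := by
              rw [ENNReal.toReal_ofReal (by positivity)]
      have hcards : (edges p ∪ edges q).card = 2*ℓ - (edges p ∩ edges q).card ∧
          (edges p ∩ edges q).card ≤ 2*ℓ := by
        have h := Finset.card_union_add_card_inter (edges p) (edges q)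
        rw [card_edges hp, card_edges hq] at h
        omega
      have h2 : (1/(n:ℝ) * c) ^ (edges p ∪ edges q).card
          ≤ b^(2*ℓ) * ((1:ℝ)/n) ^ (2*ℓ - (edges p ∩ edges q).card) := by
        rw [hcards.1, mul_pow]
        rw [mul_comm]
        apply mul_le_mul_of_nonneg_right _ (by positivity)
        calc c ^ (2*ℓ - (edges p ∩ edges q).card)
            ≤ b ^ (2*ℓ - (edges p ∩ edges q).card) :=
              pow_le_pow_left₀ hc.le hcb _
          _ ≤ b^(2*ℓ) := pow_le_pow_right₀ hb1 (by omega)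
      have h3 : 0 ≤ (P (A W c p)).toReal * (P (A W c q)).toReal := by positivity
      linarith [h1.trans h2]
  have hVarle : variance cnt P ≤ Cvar * n := by
    rw [hVareq]
    calc ∑ z ∈ Pinj ×ˢ Pinj, ((P (A W c z.1 ∩ A W c z.2)).toReal
          - (P (A W c z.1)).toReal * (P (A W c z.2)).toReal)
        ≤ ∑ z ∈ Pinj ×ˢ Pinj, b^(2*ℓ) * (if ¬ Disjoint (edges z.1) (edges z.2) then
            ((1:ℝ)/n) ^ (2*ℓ - (edges z.1 ∩ edges z.2).card) else 0) :=
          Finset.sum_le_sum hterm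
      _ = ∑ p ∈ Pinj, b^(2*ℓ) * ∑ q ∈ Pinj.filter
            (fun q => ¬ Disjoint (edges p) (edges q)),
            ((1:ℝ)/n) ^ (2*ℓ - (edges p ∩ edges q).card) := by
          rw [Finset.sum_product]
          refine Finset.sum_congr rfl (fun p _ => ?_)
          rw [Finset.mul_sum]
          conv_rhs => rw [Finset.sum_filter]
          refine Finset.sum_congr rfl (fun q _ => ?_)
          rw [mul_ite, mul_zero]
      _ ≤ ∑ _p ∈ Pinj, b^(2*ℓ) * ((2^ℓ * (ℓ+1)^(ℓ+1) : ℝ) * ((1:ℝ)/n)^ℓ) := by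
          refine Finset.sum_le_sum (fun p _ => ?_)
          apply mul_le_mul_of_nonneg_left _ (by positivity)
          exact sum_sharing_bound hn1
      _ = (Pinj.card : ℝ) * (b^(2*ℓ) * (C₂ * ((1:ℝ)/n)^ℓ)) := by
          rw [Finset.sum_const, nsmul_eq_mul, hC₂]
      _ ≤ ((n:ℝ)^(ℓ+1)) * (b^(2*ℓ) * (C₂ * ((1:ℝ)/n)^ℓ)) := by
          apply mul_le_mul_of_nonneg_right _ (by positivity)
          have : Pinj.card ≤ n^(ℓ+1) := by
            calc Pinj.card ≤ (Finset.univ : Finset (Fin (ℓ+1) → Fin n)).card :=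
                Finset.card_le_card (Finset.filter_subset _ _)
              _ = n^(ℓ+1) := by
                rw [Finset.card_univ, Fintype.card_fun, Fintype.card_fin, Fintype.card_fin]
          exact_mod_cast this
      _ = Cvar * n := by
          rw [hCvar]
          rw [one_div, inv_pow]
          field_simp
          ring
  -- expectation lower bound
  have hylow : ∀ p ∈ Pinj, (1/(n:ℝ) * (c/ℓ)/3) ^ ℓ ≤ (P (A W c p)).toReal := by
    intro p hp
    rw [hPinj, Finset.mem_filter] at hp
    have := single_lower hW hind hlaw hn1 hl hc hcl hp.2
    calc (1/(n:ℝ) * (c/ℓ)/3) ^ ℓ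
        = (ENNReal.ofReal ((1/(n:ℝ) * (c/ℓ)/3) ^ ℓ)).toReal := by
          rw [ENNReal.toReal_ofReal (by positivity)]
      _ ≤ (P (A W c p)).toReal := ENNReal.toReal_mono (measure_ne_top _ _) this
  have hcardPinj : ((n:ℝ) - ℓ)^(ℓ+1) ≤ (Pinj.card : ℝ) := by
    have h1 : Pinj.card = Fintype.card {p : Fin (ℓ+1) → Fin n // Function.Injective p} :=
      (Fintype.card_subtype _).symm
    have h2 : Fintype.card {p : Fin (ℓ+1) → Fin n // Function.Injective p}
        = Fintype.card (Fin (ℓ+1) ↪ Fin n) :=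
      Fintype.card_congr (Equiv.subtypeInjectiveEquivEmbedding _ _)
    have h3 : Fintype.card (Fin (ℓ+1) ↪ Fin n) = n.descFactorial (ℓ+1) := by
      rw [Fintype.card_embedding_eq, Fintype.card_fin, Fintype.card_fin]
    have h4 : (n - ℓ)^(ℓ+1) ≤ n.descFactorial (ℓ+1) := by
      have := Nat.pow_sub_le_descFactorial n (ℓ+1)
      have he : n + 1 - (ℓ+1) = n - ℓ := by omega
      rwa [he] at this
    have h5 : ((n - ℓ : ℕ) : ℝ) = (n:ℝ) - ℓ := by
      have : ℓ ≤ n := by omega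
      push_cast [this]
      ring
    rw [h1, h2, h3, ← h5]
    exact_mod_cast h4
  have hElower : c₀ * n ≤ E := by
    have hstep : (Pinj.card : ℝ) * (1/(n:ℝ) * (c/ℓ)/3) ^ ℓ ≤ E := by
      rw [hEeq]
      calc (Pinj.card : ℝ) * (1/(n:ℝ) * (c/ℓ)/3) ^ ℓ
          = ∑ _p ∈ Pinj, (1/(n:ℝ) * (c/ℓ)/3) ^ ℓ := by
            rw [Finset.sum_const, nsmul_eq_mul]
        _ ≤ ∑ p ∈ Pinj, (P (A W c p)).toReal := Finset.sum_le_sum hylow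
    have hn2 : (n:ℝ)/2 ≤ (n:ℝ) - ℓ := by
      have : (2*ℓ + 2 : ℝ) ≤ n := by exact_mod_cast hn
      linarith
    have hkey : c₀ * n ≤ (Pinj.card : ℝ) * (1/(n:ℝ) * (c/ℓ)/3) ^ ℓ := by
      have hbase : (0:ℝ) ≤ (n:ℝ)/2 := by positivity
      have hc1 : ((n:ℝ)/2)^(ℓ+1) ≤ ((n:ℝ) - ℓ)^(ℓ+1) := pow_le_pow_left₀ hbase hn2 _
      have hc2 : ((n:ℝ)/2)^(ℓ+1) * (1/(n:ℝ) * (c/ℓ)/3) ^ ℓ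
          ≤ (Pinj.card : ℝ) * (1/(n:ℝ) * (c/ℓ)/3) ^ ℓ := by
        apply mul_le_mul_of_nonneg_right (hc1.trans hcardPinj) (by positivity)
      refine le_trans (le_of_eq ?_) hc2
      have hy : (1/(n:ℝ) * (c/ℓ)/3) ^ ℓ = (c/(3*ℓ))^ℓ * ((1:ℝ)/n)^ℓ := by
        rw [← mul_pow]
        congr 1
        ring
      rw [hc₀, hy]
      have hne : (n:ℝ) ≠ 0 := hn0.ne'
      have hl0' : (ℓ:ℝ) ≠ 0 := hl0.ne'
      simp only [one_div, inv_pow, div_pow]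
      field_simp
      ring
    exact hkey.trans hstep
  have hEpos : 0 < E := lt_of_lt_of_le (by positivity) hElower
  -- Chebyshev
  have hsubset : {ω | 2 * E ≤ cnt ω} ⊆ {ω | E ≤ |cnt ω - E|} := by
    intro ω hω
    rw [Set.mem_setOf_eq] at hω ⊢
    rw [le_abs]
    left
    linarith
  have hcheb := meas_ge_le_variance_div_sq (μ := P) hMem hEpos
  calc P {ω | 2 * ∫ ω', cnt ω' ∂P ≤ cnt ω}
      ≤ P {ω | E ≤ |cnt ω - E|} := measure_mono hsubset
    _ ≤ ENNReal.ofReal (variance cnt P / E^2) := hcheb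
    _ ≤ ENNReal.ofReal ((Cvar / c₀^2) / n) := by
        apply ENNReal.ofReal_le_ofReal
        have hd : variance cnt P / E^2 ≤ (Cvar * n) / (c₀ * n)^2 := by
          apply div_le_div₀ (by positivity) hVarle (by positivity)
          exact pow_le_pow_left₀ (by positivity) hElower 2
        refine hd.trans (le_of_eq ?_)
        field_simp


end LightProb


/-- **Concentration of the number of short `(λ,1)`-light paths.**
There is an absolute constant `η₀ > 0` such that for all `0 < η < η' < η₀`, with
`λ = 1/e + η`, `ℓ = ⌊1/η'⌋` and `N_{η'}` the number of `(λ,1)`-light paths of length `ℓ`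
in the stochastic mean-field model, one has `P(N_{η'} ≥ 2·E[N_{η'}]) → 0` as `n → ∞`. -/
theorem light_path_count_not_large :
    ∃ η₀ : ℝ, 0 < η₀ ∧
      ∀ η η' : ℝ, 0 < η → η < η' → η' < η₀ →
      ∀ (Ω : ℕ → Type) (mΩ : ∀ n, MeasurableSpace (Ω n)) (P : ∀ n, Measure (Ω n)),
        (∀ n, IsProbabilityMeasure (P n)) →
      ∀ W : ∀ n, Sym2 (Fin n) → Ω n → ℝ,
        (∀ n, iIndepFun (W n) (P n)) →
        (∀ n e, Measure.map (W n e) (P n) = expMeasure (1 / n)) →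
      Tendsto
        (fun n => P n {ω |
          2 * ∫ ω', (lightPathCount n ⌊1 / η'⌋₊ (1 / Real.exp 1 + η)
              (fun e => W n e ω') : ℝ) ∂(P n)
            ≤ (lightPathCount n ⌊1 / η'⌋₊ (1 / Real.exp 1 + η)
              (fun e => W n e ω) : ℝ)})
        atTop (nhds 0) := by
  classical
  refine ⟨1/100, by norm_num, ?_⟩
  intro η η' hη hηη' hη₀ Ω mΩ P hP W hind hlaw
  have hη'pos : 0 < η' := hη.trans hηη'
  set ℓ : ℕ := ⌊1 / η'⌋₊ with hℓdef
  set lam : ℝ := 1 / Real.exp 1 + η with hlamdef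
  have hℓ100 : 100 ≤ ℓ := by
    rw [hℓdef]
    apply Nat.le_floor
    rw [show ((100:ℕ):ℝ) = 100 by norm_num, le_div_iff₀ hη'pos]
    nlinarith
  have hl1 : 1 ≤ ℓ := by omega
  have hℓR : (100:ℝ) ≤ (ℓ:ℝ) := by exact_mod_cast hℓ100
  have hsqrt10 : 10 ≤ Real.sqrt ℓ := by
    rw [show (10:ℝ) = Real.sqrt 100 by
      rw [show (100:ℝ) = 10^2 by norm_num, Real.sqrt_sq (by norm_num)]]
    exact Real.sqrt_le_sqrt hℓR
  have hsqrtsq : Real.sqrt ℓ * Real.sqrt ℓ = (ℓ:ℝ) := Real.mul_self_sqrt (by positivity)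
  have hexp_pos : (0:ℝ) < Real.exp 1 := Real.exp_pos 1
  have he2 : Real.exp 1 < 2.7182818286 := Real.exp_one_lt_d9
  have he1 : (2.7182818283:ℝ) < Real.exp 1 := Real.exp_one_gt_d9
  have hlam_lb : (1/3:ℝ) ≤ lam := by
    have h1 : (1:ℝ)/2.7182818286 < 1/Real.exp 1 := by
      apply one_div_lt_one_div_of_lt hexp_pos he2
    have h2 : (1/3:ℝ) ≤ 1/2.7182818286 := by norm_num
    rw [hlamdef]
    linarith
  have hlam_ub : lam ≤ 1 := by
    have h1 : (1:ℝ)/Real.exp 1 ≤ 1/2 := by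
      apply one_div_le_one_div_of_le (by norm_num)
      linarith
    have h2 : η ≤ 1/100 := by linarith
    rw [hlamdef]
    linarith
  set c : ℝ := lam * ℓ - Real.sqrt ℓ with hcdef
  have hc : 0 < c := by
    have h1 : (1/3:ℝ) * (ℓ:ℝ) ≤ lam * ℓ := by
      apply mul_le_mul_of_nonneg_right hlam_lb (by positivity)
    have h2 : 10 * Real.sqrt ℓ ≤ (ℓ:ℝ) := by
      nlinarith [hsqrt10, hsqrtsq, Real.sqrt_nonneg (ℓ:ℝ)]
    rw [hcdef]
    clear_value lam
    linarith [hsqrt10, h1, h2]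
  have hcl : c ≤ (ℓ:ℝ) := by
    have h1 : lam * ℓ ≤ 1 * ℓ := mul_le_mul_of_nonneg_right hlam_ub (by positivity)
    have h2 : 0 ≤ Real.sqrt ℓ := Real.sqrt_nonneg _
    rw [hcdef]
    clear_value lam
    linarith
  obtain ⟨C, hCpos, hCbound⟩ := LightProb.core_bound hl1 hc hcl hcdef.symm
  have hbound : ∀ᶠ n in atTop,
      P n {ω | 2 * ∫ ω', (lightPathCount n ℓ lam (fun e => W n e ω') : ℝ) ∂(P n)
          ≤ (lightPathCount n ℓ lam (fun e => W n e ω) : ℝ)}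
        ≤ ENNReal.ofReal (C / n) := by
    filter_upwards [eventually_ge_atTop (2*ℓ + 2)] with n hn
    haveI := hP n
    have hn1 : 1 ≤ n := by omega
    have hrpos : (0:ℝ) < 1/(n:ℝ) := by
      have : (0:ℝ) < n := by exact_mod_cast hn1
      positivity
    haveI hprob : IsProbabilityMeasure (expMeasure ((1:ℝ)/n)) :=
      isProbabilityMeasure_expMeasure hrpos
    have hae : ∀ e : Sym2 (Fin n), AEMeasurable (W n e) (P n) := by
      intro e
      by_contra h
      have h0 : (expMeasure ((1:ℝ)/n)) Set.univ = 1 := measure_univ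
      rw [← hlaw n e, Measure.map_of_not_aemeasurable h] at h0
      simp at h0
    set W' : Sym2 (Fin n) → Ω n → ℝ := fun e => (hae e).mk (W n e) with hW'def
    have hW'meas : ∀ e, Measurable (W' e) := fun e => (hae e).measurable_mk
    have heq : ∀ e, W n e =ᵐ[P n] W' e := fun e => (hae e).ae_eq_mk
    have hlaw' : ∀ e, Measure.map (W' e) (P n) = expMeasure (1/(n:ℝ)) := by
      intro e
      rw [← Measure.map_congr (heq e)]
      exact hlaw n e
    have hGae : ∀ᵐ ω ∂(P n), ∀ e : Sym2 (Fin n), W n e ω = W' e ω :=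
      (MeasureTheory.ae_all_iff).2 (fun e => heq e)
    have hind' : iIndepFun W' (P n) := by
      rw [iIndepFun_iff_measure_inter_preimage_eq_mul]
      have hbase := (iIndepFun_iff_measure_inter_preimage_eq_mul).1 (hind n)
      intro S sets hsets
      have hpre : ∀ i : Sym2 (Fin n), P n (W' i ⁻¹' sets i) = P n (W n i ⁻¹' sets i) := by
        intro i
        apply measure_congr
        filter_upwards [heq i] with ω hω
        have : (ω ∈ W' i ⁻¹' sets i) ↔ (ω ∈ W n i ⁻¹' sets i) := by
          simp only [Set.mem_preimage, hω]
        exact propext this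
      have hInter : P n (⋂ i ∈ S, W' i ⁻¹' sets i) = P n (⋂ i ∈ S, W n i ⁻¹' sets i) := by
        apply measure_congr
        filter_upwards [hGae] with ω hω
        have : (ω ∈ ⋂ i ∈ S, W' i ⁻¹' sets i) ↔ (ω ∈ ⋂ i ∈ S, W n i ⁻¹' sets i) := by
          simp only [Set.mem_iInter, Set.mem_preimage]
          constructor <;> intro h i hi
          · rw [hω i]; exact h i hi
          · rw [← hω i]; exact h i hi
        exact propext this
      rw [hInter, hbase S hsets]
      exact Finset.prod_congr rfl (fun i _ => (hpre i).symm)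
    have hcnt_ae : ∀ᵐ ω ∂(P n), (lightPathCount n ℓ lam (fun e => W n e ω) : ℝ)
        = (lightPathCount n ℓ lam (fun e => W' e ω) : ℝ) := by
      filter_upwards [hGae] with ω hω
      have : (fun e => W n e ω) = (fun e => W' e ω) := funext (fun e => hω e)
      rw [this]
    have hint_eq : ∫ ω', (lightPathCount n ℓ lam (fun e => W n e ω') : ℝ) ∂(P n)
        = ∫ ω', (lightPathCount n ℓ lam (fun e => W' e ω') : ℝ) ∂(P n) :=
      integral_congr_ae hcnt_ae
    have hset_ae : {ω | 2 * ∫ ω', (lightPathCount n ℓ lam (fun e => W n e ω') : ℝ) ∂(P n)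
          ≤ (lightPathCount n ℓ lam (fun e => W n e ω) : ℝ)}
        =ᵐ[P n] {ω | 2 * ∫ ω', (lightPathCount n ℓ lam (fun e => W' e ω') : ℝ) ∂(P n)
          ≤ (lightPathCount n ℓ lam (fun e => W' e ω) : ℝ)} := by
      filter_upwards [hcnt_ae] with ω hω
      have : (2 * ∫ ω', (lightPathCount n ℓ lam (fun e => W n e ω') : ℝ) ∂(P n)
            ≤ (lightPathCount n ℓ lam (fun e => W n e ω) : ℝ))
          ↔ (2 * ∫ ω', (lightPathCount n ℓ lam (fun e => W' e ω') : ℝ) ∂(P n)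
            ≤ (lightPathCount n ℓ lam (fun e => W' e ω) : ℝ)) := by
        rw [hint_eq, hω]
      exact propext this
    refine le_of_eq_of_le (measure_congr hset_ae) ?_
    exact hCbound n hn (Ω n) (mΩ n) (P n) (hP n) W' hW'meas hind' hlaw'
  have hupper : Tendsto (fun n : ℕ => ENNReal.ofReal (C / n)) atTop (nhds 0) := by
    have h1 : Tendsto (fun n : ℕ => C / (n:ℝ)) atTop (nhds 0) :=
      tendsto_const_div_atTop_nhds_zero_nat C
    have h2 := (ENNReal.continuous_ofReal.tendsto 0).comp h1
    simpa [Function.comp_def] using h2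
  exact tendsto_of_tendsto_of_tendsto_of_le_of_le' tendsto_const_nhds hupper
    (Filter.Eventually.of_forall (fun n => zero_le)) hbound
end
end

section
/- Let λ = 1/e + η with η > 0. For every n ≥ 1 and every integer k ≥ 1, the expected number of λ-light paths of length k in SMF_n is at most (n/√(2πk))·e^{e·k·η}; equivalently, Σ_{π ∈ Π_k} P(A(π) ≤ λ) ≤ (n/√(2πk))·e^{ekη}, where Π_k is the set of all paths of length k. -/
open MeasureTheory ProbabilityTheory Real Filter Topology
open scoped ENNReal

noncomputable section

lemma expMeasure_eq (r : ℝ) : expMeasure r = volume.withDensity (exponentialPDF r) := rfl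

lemma measurable_exponentialPDF (r : ℝ) : Measurable (exponentialPDF r) :=
  ENNReal.measurable_ofReal.comp (measurable_exponentialPDFReal r)

lemma simplex_bound (r : ℝ) (hr : 0 < r) :
    ∀ (k : ℕ) (t : ℝ),
      (Measure.pi fun _ : Fin k => expMeasure r) {x | ∑ i, x i ≤ t}
        ≤ if 0 ≤ t then ENNReal.ofReal ((r * t) ^ k / (Nat.factorial k)) else 0 := by
  haveI : IsProbabilityMeasure (expMeasure r) := isProbabilityMeasure_expMeasure hr
  intro k
  induction k with
  | zero =>
    intro t
    by_cases ht : 0 ≤ t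
    · simp only [ht, if_true, pow_zero, Nat.factorial_zero, Nat.cast_one, div_one,
        ENNReal.ofReal_one]
      exact prob_le_one
    · have hset : {x : Fin 0 → ℝ | ∑ i, x i ≤ t} = ∅ := by
        ext x
        simp only [Set.mem_setOf_eq, Finset.univ_eq_empty, Finset.sum_empty, Set.mem_empty_iff_false,
          iff_false, not_le]
        linarith [not_le.mp ht]
      simp [hset, ht]
  | succ k ih =>
    intro t
    have hmp := measurePreserving_piFinSuccAbove (fun _ : Fin (k+1) => expMeasure r) 0
    set T : Set (ℝ × (Fin k → ℝ)) := {y | y.1 + ∑ i, y.2 i ≤ t} with hTdef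
    have hT : MeasurableSet T := by
      apply measurableSet_le _ measurable_const
      exact measurable_fst.add (Finset.measurable_sum _ fun i _ => (measurable_pi_apply i).comp measurable_snd)
    have hpre : (⇑(MeasurableEquiv.piFinSuccAbove (fun _ : Fin (k+1) => ℝ) 0)) ⁻¹' T
        = {x : Fin (k+1) → ℝ | ∑ i, x i ≤ t} := by
      ext x
      simp only [Set.mem_preimage, MeasurableEquiv.piFinSuccAbove_apply, hTdef, Set.mem_setOf_eq,
        Fin.sum_univ_succ, Fin.succAbove_zero, Function.comp, Fin.insertNthEquiv,
        Equiv.coe_fn_symm_mk, Fin.removeNth]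
    have h1 : (Measure.pi fun _ : Fin (k+1) => expMeasure r) {x | ∑ i, x i ≤ t}
        = ((expMeasure r).prod (Measure.pi fun _ : Fin k => expMeasure r)) T := by
      rw [← hpre, hmp.measure_preimage hT.nullMeasurableSet]
    rw [h1, Measure.prod_apply hT]
    have hslice : ∀ a : ℝ, (Prod.mk a ⁻¹' T) = {x : Fin k → ℝ | ∑ i, x i ≤ t - a} := by
      intro a
      ext x
      simp only [Set.mem_preimage, hTdef, Set.mem_setOf_eq]
      constructor <;> intro h <;> linarith
    have step1 : ∫⁻ a, (Measure.pi fun _ : Fin k => expMeasure r) (Prod.mk a ⁻¹' T) ∂expMeasure r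
        ≤ ∫⁻ a, (if 0 ≤ t - a then ENNReal.ofReal ((r * (t - a)) ^ k / (Nat.factorial k)) else 0)
            ∂expMeasure r := by
      apply lintegral_mono
      intro a
      simp only [hslice]
      exact ih (t - a)
    refine step1.trans ?_
    have hg : Measurable fun a : ℝ =>
        (if 0 ≤ t - a then ENNReal.ofReal ((r * (t - a)) ^ k / (Nat.factorial k)) else 0) := by
      apply Measurable.ite
      · exact measurableSet_le measurable_const (measurable_const.sub measurable_id)
      · exact ENNReal.measurable_ofReal.comp
          ((((measurable_const.sub measurable_id).const_mul r).pow_const k).div_const _)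
      · exact measurable_const
    rw [expMeasure_eq, lintegral_withDensity_eq_lintegral_mul volume (measurable_exponentialPDF r) hg]
    have hbound : ∀ a : ℝ, (exponentialPDF r * fun a =>
          (if 0 ≤ t - a then ENNReal.ofReal ((r * (t - a)) ^ k / (Nat.factorial k)) else 0)) a
        ≤ Set.indicator (Set.Icc 0 t)
            (fun a => ENNReal.ofReal (r * ((r * (t - a)) ^ k / (Nat.factorial k)))) a := by
      intro a
      simp only [Pi.mul_apply]
      rcases lt_or_ge a 0 with ha | ha
      · rw [exponentialPDF_of_neg ha, zero_mul]
        exact zero_le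
      rcases le_or_gt a t with hat | hat
      · rw [Set.indicator_of_mem (Set.mem_Icc.mpr ⟨ha, hat⟩), if_pos (by linarith)]
        rw [exponentialPDF_of_nonneg ha, ENNReal.ofReal_mul hr.le]
        have h2 : ENNReal.ofReal (rexp (-(r * a))) ≤ 1 := by
          rw [← ENNReal.ofReal_one]
          exact ENNReal.ofReal_le_ofReal (exp_le_one_iff.mpr (by nlinarith))
        calc ENNReal.ofReal r * ENNReal.ofReal (rexp (-(r * a)))
              * ENNReal.ofReal ((r * (t - a)) ^ k / (Nat.factorial k))
            ≤ ENNReal.ofReal r * 1 * ENNReal.ofReal ((r * (t - a)) ^ k / (Nat.factorial k)) := by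
              gcongr
          _ = ENNReal.ofReal (r * ((r * (t - a)) ^ k / (Nat.factorial k))) := by
              rw [mul_one, ← ENNReal.ofReal_mul hr.le]
      · rw [if_neg (by linarith), mul_zero]
        exact zero_le
    refine (lintegral_mono hbound).trans ?_
    rw [lintegral_indicator measurableSet_Icc]
    by_cases ht : 0 ≤ t
    swap
    · rw [Set.Icc_eq_empty (by linarith), Measure.restrict_empty, lintegral_zero_measure]
      simp [ht]
    rw [if_pos ht]
    have hInt : IntegrableOn (fun a => r * ((r * (t - a)) ^ k / (Nat.factorial k)))
        (Set.Icc 0 t) volume := by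
      apply Continuous.integrableOn_Icc
      fun_prop
    have hnonneg : 0 ≤ᵐ[volume.restrict (Set.Icc 0 t)]
        fun a => r * ((r * (t - a)) ^ k / (Nat.factorial k)) := by
      filter_upwards [ae_restrict_mem measurableSet_Icc] with a ha
      have : 0 ≤ t - a := by linarith [ha.2]
      positivity
    rw [← ofReal_integral_eq_lintegral_ofReal hInt hnonneg]
    apply ENNReal.ofReal_le_ofReal
    have heq : ∀ a : ℝ, r * ((r * (t - a)) ^ k / (Nat.factorial k))
        = (r ^ (k+1) / (Nat.factorial k)) * (t - a) ^ k := by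
      intro a; rw [mul_pow]; ring
    rw [MeasureTheory.integral_congr_ae (Filter.EventuallyEq.of_eq (funext heq)),
      MeasureTheory.integral_const_mul, MeasureTheory.integral_Icc_eq_integral_Ioc,
      ← intervalIntegral.integral_of_le ht, intervalIntegral.integral_comp_sub_left (fun x => x ^ k) t]
    rw [sub_self, sub_zero, integral_pow]
    apply le_of_eq
    rw [Nat.factorial_succ]
    push_cast
    rw [zero_pow (Nat.succ_ne_zero k), sub_zero, mul_pow]
    field_simp

lemma aemeasurable_tuple {Ω : Type*} [MeasurableSpace Ω] {P : Measure Ω} {k : ℕ}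
    {f : Fin k → Ω → ℝ} (h : ∀ i, AEMeasurable (f i) P) :
    AEMeasurable (fun ω (i : Fin k) => f i ω) P := by
  refine ⟨fun ω i => (h i).mk _ ω, measurable_pi_lambda _ fun i => (h i).measurable_mk, ?_⟩
  filter_upwards [ae_all_iff.mpr fun i : Fin k => (h i).ae_eq_mk] with ω hω
  funext i; exact hω i

lemma map_tuple_eq_pi {Ω : Type*} [MeasurableSpace Ω] {P : Measure Ω} [IsProbabilityMeasure P]
    {ι : Type*} (W : ι → Ω → ℝ)
    (hindep : iIndepFun W P)
    (hmeas : ∀ i, AEMeasurable (W i) P)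
    (μ : Measure ℝ) [IsProbabilityMeasure μ] (hdist : ∀ i, Measure.map (W i) P = μ)
    {k : ℕ} (e : Fin k → ι) (he : Function.Injective e) :
    Measure.map (fun ω i => W (e i) ω) P = Measure.pi (fun _ : Fin k => μ) := by
  classical
  refine (Measure.pi_eq fun s hs => ?_).symm
  rw [Measure.map_apply_of_aemeasurable (aemeasurable_tuple fun i => hmeas (e i))
    (MeasurableSet.univ_pi hs)]
  have hpre : (fun ω (i : Fin k) => W (e i) ω) ⁻¹' Set.univ.pi s
      = ⋂ i : Fin k, W (e i) ⁻¹' s i := by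
    ext ω; simp [Set.mem_univ_pi]
  rw [hpre]
  set sets : ι → Set ℝ := fun c => ⋂ i, ⋂ (_ : e i = c), s i with hsets
  have hset : ∀ j, sets (e j) = s j := by
    intro j
    ext x
    simp only [hsets, Set.mem_iInter]
    constructor
    · intro h; exact h j rfl
    · intro hx i hi; cases he hi; exact hx
  have hsetsMeas : ∀ c ∈ Finset.univ.image e, MeasurableSet (sets c) := by
    intro c _
    exact MeasurableSet.iInter fun i => MeasurableSet.iInter fun _ => hs i
  have hmul := hindep.measure_inter_preimage_eq_mul (Finset.univ.image e) hsetsMeas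
  have hInter : (⋂ c ∈ Finset.univ.image e, W c ⁻¹' sets c)
      = ⋂ i : Fin k, W (e i) ⁻¹' s i := by
    ext ω
    simp only [Set.mem_iInter, Finset.mem_image, Finset.mem_univ, true_and]
    constructor
    · intro h i
      have := h (e i) ⟨i, rfl⟩
      rwa [hset i] at this
    · rintro h c ⟨i, rfl⟩
      rw [hset i]; exact h i
  rw [← hInter, hmul, Finset.prod_image (fun i _ j _ h => he h)]
  refine Finset.prod_congr rfl fun i _ => ?_
  rw [hset i, ← hdist (e i), Measure.map_apply_of_aemeasurable (hmeas (e i)) (hs i)]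

lemma path_prob_le {Ω : Type*} [MeasurableSpace Ω] {P : Measure Ω} [IsProbabilityMeasure P]
    {ι : Type*} (W : ι → Ω → ℝ)
    (hindep : iIndepFun W P)
    (hmeas : ∀ i, AEMeasurable (W i) P)
    (r : ℝ) (hr : 0 < r) (hdist : ∀ i, Measure.map (W i) P = expMeasure r)
    {k : ℕ} (e : Fin k → ι) (he : Function.Injective e) (t : ℝ) :
    P {ω | ∑ i : Fin k, W (e i) ω ≤ t}
      ≤ ENNReal.ofReal ((r * t) ^ k / (Nat.factorial k)) := by
  haveI : IsProbabilityMeasure (expMeasure r) := isProbabilityMeasure_expMeasure hr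
  have hsum : MeasurableSet {x : Fin k → ℝ | ∑ i, x i ≤ t} :=
    measurableSet_le (Finset.measurable_sum _ fun i _ => measurable_pi_apply i) measurable_const
  have hpre : {ω | ∑ i : Fin k, W (e i) ω ≤ t}
      = (fun ω (i : Fin k) => W (e i) ω) ⁻¹' {x | ∑ i, x i ≤ t} := rfl
  rw [hpre, ← Measure.map_apply_of_aemeasurable (aemeasurable_tuple fun i => hmeas (e i)) hsum,
    map_tuple_eq_pi W hindep hmeas _ hdist e he]
  refine (simplex_bound r hr k t).trans ?_
  split_ifs with ht
  · exact le_rfl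
  · exact zero_le

lemma fact_lower_bound (k : ℕ) (hk : 1 ≤ k) :
    Real.sqrt (2 * π * k) * ((k : ℝ) / Real.exp 1) ^ k ≤ (Nat.factorial k : ℝ) := by
  obtain ⟨m, rfl⟩ := Nat.exists_eq_succ_of_ne_zero (Nat.one_le_iff_ne_zero.mp hk)
  set k := m + 1
  have hkpos : (0:ℝ) < k := by positivity
  have h1 : Real.sqrt π ≤ Stirling.stirlingSeq k := by
    have ht : Tendsto (Stirling.stirlingSeq ∘ Nat.succ) atTop (𝓝 (Real.sqrt π)) :=
      Stirling.tendsto_stirlingSeq_sqrt_pi.comp (tendsto_add_atTop_nat 1)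
    exact Stirling.stirlingSeq'_antitone.le_of_tendsto ht m
  rw [Stirling.stirlingSeq] at h1
  have hD : (0:ℝ) < Real.sqrt (2 * k) * ((k : ℝ) / Real.exp 1) ^ k := by positivity
  rw [le_div_iff₀ hD] at h1
  calc Real.sqrt (2 * π * k) * ((k : ℝ) / Real.exp 1) ^ k
      = Real.sqrt π * (Real.sqrt (2 * k) * ((k : ℝ) / Real.exp 1) ^ k) := by
        rw [show (2 : ℝ) * π * k = π * (2 * k) by ring, Real.sqrt_mul pi_nonneg]
        ring
    _ ≤ (Nat.factorial k : ℝ) := h1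

lemma edges_inj {n k : ℕ} (p : Fin (k + 1) → Fin n) (hp : Function.Injective p) :
    Function.Injective (fun i : Fin k => s(p i.castSucc, p i.succ)) := by
  intro i j h
  simp only at h
  rcases Sym2.eq_iff.mp h with ⟨h1, h2⟩ | ⟨h1, h2⟩
  · exact Fin.castSucc_injective _ (hp h1)
  · have h1' := congrArg Fin.val (hp h1)
    have h2' := congrArg Fin.val (hp h2)
    simp only [Fin.coe_castSucc, Fin.val_succ] at h1' h2'
    omega

lemma arith_bound (η : ℝ) (hη : 0 < η) (n k : ℕ) (hn : 1 ≤ n) (hk : 1 ≤ k) :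
    (n : ℝ) ^ (k + 1) * ((1 / (n : ℝ) * ((1 / Real.exp 1 + η) * k)) ^ k / (Nat.factorial k))
      ≤ (n : ℝ) / Real.sqrt (2 * π * k) * Real.exp (Real.exp 1 * k * η) := by
  have hnpos : (0:ℝ) < n := by exact_mod_cast hn
  have hkpos : (0:ℝ) < k := by exact_mod_cast hk
  have hepos := Real.exp_pos 1
  have hlam : (0:ℝ) < 1 / Real.exp 1 + η := by positivity
  set lam : ℝ := 1 / Real.exp 1 + η with hlamdef
  have hLHS : (n : ℝ) ^ (k + 1) * ((1 / (n : ℝ) * (lam * k)) ^ k / (Nat.factorial k))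
      = (n : ℝ) * ((lam * k) ^ k / (Nat.factorial k)) := by
    rw [mul_pow, pow_succ]
    field_simp
    ring_nf
    rw [← mul_pow, mul_inv_cancel₀ hnpos.ne', one_pow]
  rw [hLHS]
  have hD : (0:ℝ) < Real.sqrt (2 * π * k) * ((k : ℝ) / Real.exp 1) ^ k := by positivity
  have step1 : (n : ℝ) * ((lam * k) ^ k / (Nat.factorial k))
      ≤ (n : ℝ) * ((lam * k) ^ k / (Real.sqrt (2 * π * k) * ((k : ℝ) / Real.exp 1) ^ k)) := by
    gcongr
    exact fact_lower_bound k hk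
  refine step1.trans ?_
  have hsq : (0:ℝ) < Real.sqrt (2 * π * k) := by positivity
  have step2 : (lam * k) ^ k / (Real.sqrt (2 * π * k) * ((k : ℝ) / Real.exp 1) ^ k)
      = (lam * Real.exp 1) ^ k / Real.sqrt (2 * π * k) := by
    have hBne : ((k:ℝ) / Real.exp 1) ^ k ≠ 0 := by positivity
    have key : (lam * k) ^ k = ((k:ℝ) / Real.exp 1) ^ k * (lam * Real.exp 1) ^ k := by
      rw [← mul_pow]
      congr 1
      field_simp
    rw [key, mul_comm (Real.sqrt (2 * π * (k:ℝ))) _, mul_div_mul_left _ _ hBne]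
  rw [step2]
  have hle : lam * Real.exp 1 = 1 + η * Real.exp 1 := by
    rw [hlamdef]
    field_simp
  have step3 : (lam * Real.exp 1) ^ k ≤ Real.exp (Real.exp 1 * k * η) := by
    rw [hle]
    calc (1 + η * Real.exp 1) ^ k ≤ (Real.exp (η * Real.exp 1)) ^ k := by
          apply pow_le_pow_left₀ (by positivity)
          linarith [Real.add_one_le_exp (η * Real.exp 1)]
      _ = Real.exp (Real.exp 1 * k * η) := by
          rw [← Real.exp_nat_mul]
          ring_nf
  calc (n : ℝ) * ((lam * Real.exp 1) ^ k / Real.sqrt (2 * π * k))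
      ≤ (n : ℝ) * (Real.exp (Real.exp 1 * k * η) / Real.sqrt (2 * π * k)) := by
        gcongr
    _ = (n : ℝ) / Real.sqrt (2 * π * k) * Real.exp (Real.exp 1 * k * η) := by ring
/-- **First moment bound on the number of `λ`-light paths of a given length.**
Let `λ = 1/e + η` with `η > 0`. For every `n ≥ 1` and integer `k ≥ 1`, the expected number of
`λ`-light paths of length `k` in the stochastic mean-field model on `n` vertices is at most
`(n/√(2πk))·e^{e·k·η}`. -/
theorem expected_number_of_light_paths_le
    (η : ℝ) (hη : 0 < η) (n k : ℕ) (hn : 1 ≤ n) (hk : 1 ≤ k)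
    (Ω : Type*) (mΩ : MeasurableSpace Ω) (P : Measure Ω) [IsProbabilityMeasure P]
    (W : Sym2 (Fin n) → Ω → ℝ)
    (hindep : iIndepFun W P)
    (hdist : ∀ e, Measure.map (W e) P = expMeasure (1 / n)) :
    ∫ ω, (Nat.card {p : Fin (k + 1) → Fin n // Function.Injective p ∧
          pathWeight (fun e => W e ω) p ≤ (1 / Real.exp 1 + η) * k} : ℝ) ∂P
      ≤ (n : ℝ) / Real.sqrt (2 * Real.pi * k)
          * Real.exp (Real.exp 1 * k * η) := by
  classical
  have hnpos : (0:ℝ) < n := by exact_mod_cast hn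
  have hr : (0:ℝ) < 1 / (n:ℝ) := by positivity
  haveI : IsProbabilityMeasure (expMeasure (1 / (n:ℝ))) := isProbabilityMeasure_expMeasure hr
  set t : ℝ := (1 / Real.exp 1 + η) * k with htdef
  have ht0 : 0 ≤ t := by
    have : (0:ℝ) ≤ (k:ℝ) := Nat.cast_nonneg k
    have h1 : (0:ℝ) < 1 / Real.exp 1 + η := by positivity
    positivity
  have hmeas : ∀ e, AEMeasurable (W e) P := by
    intro e
    by_contra h
    have h0 := Measure.map_of_not_aemeasurable h
    rw [hdist e] at h0
    exact (IsProbabilityMeasure.ne_zero (expMeasure (1 / (n:ℝ)))) h0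
  set I : Finset (Fin (k+1) → Fin n) := Finset.univ.filter Function.Injective with hIdef
  set E : (Fin (k+1) → Fin n) → Set Ω :=
    fun p => {ω | pathWeight (fun e => W e ω) p ≤ t} with hEdef
  -- null measurability and integrability of indicators
  have hfmeas : ∀ p : Fin (k+1) → Fin n,
      AEMeasurable (fun ω => ∑ i : Fin k, W s(p i.castSucc, p i.succ) ω) P := by
    intro p
    exact Finset.aemeasurable_fun_sum _ fun i _ => hmeas _
  have hEnull : ∀ p, NullMeasurableSet (E p) P := by
    intro p
    have : E p = (fun ω => ∑ i : Fin k, W s(p i.castSucc, p i.succ) ω) ⁻¹' Set.Iic t := rfl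
    rw [this]
    exact (hfmeas p).nullMeasurable measurableSet_Iic
  have hint : ∀ p, Integrable ((E p).indicator fun _ => (1:ℝ)) P := by
    intro p
    have hE' : MeasurableSet (toMeasurable P (E p)) := measurableSet_toMeasurable _ _
    have h1 : Integrable ((toMeasurable P (E p)).indicator fun _ => (1:ℝ)) P :=
      (integrable_indicator_iff hE').2 (integrableOn_const (measure_lt_top P _).ne)
    exact h1.congr (indicator_ae_eq_of_ae_eq_set ((hEnull p).toMeasurable_ae_eq))
  have hintegral : ∀ p, ∫ ω, (E p).indicator (fun _ => (1:ℝ)) ω ∂P = (P (E p)).toReal := by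
    intro p
    have hE' : MeasurableSet (toMeasurable P (E p)) := measurableSet_toMeasurable _ _
    rw [integral_congr_ae (indicator_ae_eq_of_ae_eq_set ((hEnull p).toMeasurable_ae_eq)).symm,
      integral_indicator_const (1:ℝ) hE', measureReal_def, measure_congr ((hEnull p).toMeasurable_ae_eq),
      smul_eq_mul, mul_one]
  -- counting identity
  have hcount : ∀ ω, (Nat.card {p : Fin (k + 1) → Fin n // Function.Injective p ∧
        pathWeight (fun e => W e ω) p ≤ (1 / Real.exp 1 + η) * k} : ℝ)
      = ∑ p ∈ I, (E p).indicator (fun _ => (1:ℝ)) ω := by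
    intro ω
    rw [Nat.card_eq_fintype_card, Fintype.card_subtype, ← Finset.filter_filter,
      Finset.card_filter]
    push_cast
    refine Finset.sum_congr rfl fun p hp => ?_
    by_cases h : pathWeight (fun e => W e ω) p ≤ t
    · rw [if_pos h]
      exact (Set.indicator_of_mem (show ω ∈ E p from h) (fun _ => (1:ℝ))).symm
    · rw [if_neg h]
      exact (Set.indicator_of_notMem (show ω ∉ E p from h) (fun _ => (1:ℝ))).symm
  calc ∫ ω, (Nat.card {p : Fin (k + 1) → Fin n // Function.Injective p ∧
          pathWeight (fun e => W e ω) p ≤ (1 / Real.exp 1 + η) * k} : ℝ) ∂P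
      = ∑ p ∈ I, (P (E p)).toReal := by
        rw [integral_congr_ae (Filter.Eventually.of_forall hcount),
          integral_finset_sum I fun p _ => hint p]
        exact Finset.sum_congr rfl fun p _ => hintegral p
    _ ≤ ∑ p ∈ I, ((1 / (n:ℝ) * t) ^ k / (Nat.factorial k)) := by
        refine Finset.sum_le_sum fun p hp => ?_
        have hpinj : Function.Injective p := (Finset.mem_filter.mp hp).2
        have hc : (0:ℝ) ≤ (1 / (n:ℝ) * t) ^ k / (Nat.factorial k) := by
          apply div_nonneg _ (Nat.cast_nonneg _)
          exact pow_nonneg (mul_nonneg (by positivity) ht0) k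
        refine ENNReal.toReal_le_of_le_ofReal hc ?_
        have := path_prob_le W hindep hmeas (1 / (n:ℝ)) hr hdist
          (fun i : Fin k => s(p i.castSucc, p i.succ)) (edges_inj p hpinj) t
        exact this
    _ = (I.card : ℝ) * ((1 / (n:ℝ) * t) ^ k / (Nat.factorial k)) := by
        rw [Finset.sum_const, nsmul_eq_mul]
    _ ≤ (n:ℝ) ^ (k+1) * ((1 / (n:ℝ) * t) ^ k / (Nat.factorial k)) := by
        have hc : (0:ℝ) ≤ (1 / (n:ℝ) * t) ^ k / (Nat.factorial k) := by
          apply div_nonneg _ (Nat.cast_nonneg _)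
          exact pow_nonneg (mul_nonneg (by positivity) ht0) k
        apply mul_le_mul_of_nonneg_right _ hc
        have : I.card ≤ Fintype.card (Fin (k+1) → Fin n) := by
          rw [← Finset.card_univ]
          exact Finset.card_filter_le _ _
        have hcard : Fintype.card (Fin (k+1) → Fin n) = n ^ (k+1) := by
          rw [Fintype.card_fun, Fintype.card_fin, Fintype.card_fin]
        calc (I.card : ℝ) ≤ (Fintype.card (Fin (k+1) → Fin n) : ℝ) := by exact_mod_cast this
          _ = (n:ℝ) ^ (k+1) := by rw [hcard]; push_cast; ring
    _ ≤ (n : ℝ) / Real.sqrt (2 * Real.pi * k) * Real.exp (Real.exp 1 * k * η) :=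
        arith_bound η hη n k hn hk
end
end

section
/- Let π₁, π₂, π₃, π₄ be self-avoiding paths of length ℓ in a complete graph, identified with their vertex and edge sets. Suppose |E(π₃ ∪ π₄)| = 2ℓ − j and |E(π₁ ∪ π₂) ∩ E(π₃ ∪ π₄)| = j′ where 0 ≤ j ≤ ℓ and 1 ≤ j′ ≤ 2ℓ − j, and suppose the graph π₃ ∩ π₄ (with edge set E(π₃) ∩ E(π₄)) is nonempty. Then |V(π₃) ∩ V(π₄)| + |V(π₃ ∪ π₄) ∩ V(π₁ ∪ π₂)| ≥ j + j′ + 2. -/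
open Finset Function

noncomputable section

/-- The vertex set of the path `p = (p 0, …, p m)`, as a finset. -/
def pathVerts {V : Type*} [DecidableEq V] {m : ℕ} (p : Fin (m + 1) → V) : Finset V :=
  Finset.image p Finset.univ

/-- The edge set of the path `p = (p 0, …, p m)` (the `m` consecutive pairs), as a finset. -/
def pathEdges {V : Type*} [DecidableEq V] {m : ℕ} (p : Fin (m + 1) → V) : Finset (Sym2 V) :=
  Finset.image (fun i : Fin m => s(p i.castSucc, p i.succ)) Finset.univ

section Helpers

variable {V : Type*} [DecidableEq V] {ℓ : ℕ}

/-- The pair of endpoints of an edge, as a finset. -/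
def sym2Finset : Sym2 V → Finset V :=
  Sym2.lift ⟨fun a b => ({a, b} : Finset V), fun a b => Finset.pair_comm a b⟩

lemma mem_sym2Finset {v : V} {e : Sym2 V} : v ∈ sym2Finset e ↔ v ∈ e := by
  induction e using Sym2.ind with
  | _ a b => simp [sym2Finset, Sym2.mem_iff]

/-- The vertex support of a finite set of edges. -/
def edgeSupp (F : Finset (Sym2 V)) : Finset V := F.biUnion fun e => sym2Finset e

lemma mem_edgeSupp {v : V} {F : Finset (Sym2 V)} :
    v ∈ edgeSupp F ↔ ∃ e ∈ F, v ∈ e := by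
  simp [edgeSupp, mem_sym2Finset]

lemma mem_pathVerts_iff {p : Fin (ℓ + 1) → V} {v : V} :
    v ∈ pathVerts p ↔ ∃ i, p i = v := by simp [pathVerts]

lemma mem_pathEdges_iff {p : Fin (ℓ + 1) → V} {e : Sym2 V} :
    e ∈ pathEdges p ↔ ∃ i : Fin ℓ, s(p i.castSucc, p i.succ) = e := by simp [pathEdges]

lemma vert_of_mem_edge {p : Fin (ℓ + 1) → V} {v : V} {e : Sym2 V}
    (he : e ∈ pathEdges p) (hv : v ∈ e) : v ∈ pathVerts p := by
  obtain ⟨i, hi⟩ := mem_pathEdges_iff.mp he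
  subst hi
  rcases Sym2.mem_iff.mp hv with h | h <;> rw [h] <;> exact mem_pathVerts_iff.mpr ⟨_, rfl⟩

lemma edge_idx_inj {p : Fin (ℓ + 1) → V} (hp : Injective p) {a a' : Fin ℓ}
    (h : s(p a.castSucc, p a.succ) = s(p a'.castSucc, p a'.succ)) : a = a' := by
  rw [Sym2.eq_iff] at h
  rcases h with ⟨h1, h2⟩ | ⟨h1, h2⟩
  · exact Fin.ext (by simpa [Fin.ext_iff] using congrArg Fin.val (hp h1))
  · have e1 := congrArg Fin.val (hp h1)
    have e2 := congrArg Fin.val (hp h2)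
    simp [Fin.ext_iff] at e1 e2
    omega

/-- Index of the edge incident to vertex `i` in the direction of target `tt`. -/
def stepIdx (hl : 0 < ℓ) (tt : ℕ) (i : Fin (ℓ + 1)) : Fin ℓ :=
  if i.1 ≤ tt then ⟨min i.1 (ℓ - 1), by omega⟩ else ⟨i.1 - 1, by omega⟩

lemma stepIdx_eq (hl : 0 < ℓ) (tt : ℕ) (i : Fin (ℓ + 1)) (hi : i.1 ≤ tt → i.1 < ℓ) :
    (stepIdx hl tt i).castSucc = i ∨ (stepIdx hl tt i).succ = i := by
  unfold stepIdx
  split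
  · left; apply Fin.ext; simp [Fin.castSucc, Fin.castAdd, Fin.castLE]; omega
  · right; apply Fin.ext; simp [Fin.succ]; omega

lemma step_mem {r : Fin (ℓ + 1) → V} (hl : 0 < ℓ) (tt : ℕ) (i : Fin (ℓ + 1))
    (hi : i.1 ≤ tt → i.1 < ℓ) :
    r i ∈ s(r (stepIdx hl tt i).castSucc, r (stepIdx hl tt i).succ) := by
  rcases stepIdx_eq hl tt i hi with h | h <;> rw [h] <;> simp [Sym2.mem_iff]

lemma stepIdx_inj (hl : 0 < ℓ) (tt : ℕ) {iv iw : Fin (ℓ + 1)}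
    (hiv : iv.1 ≤ tt → iv.1 < ℓ) (hiw : iw.1 ≤ tt → iw.1 < ℓ)
    (h : (stepIdx hl tt iv).1 = (stepIdx hl tt iw).1) :
    iv = iw ∨ iv.1 = tt ∨ iw.1 = tt := by
  rw [Fin.ext_iff]
  unfold stepIdx at h
  split_ifs at h <;> simp at h <;> omega

/-- Key counting lemma: for a nonempty set `F` of edges of the (connected) union of the
two paths `p, q` sharing a vertex `u`, with an edge of `F` lying on `p`, the number of
vertices of the union is at most the number of vertices touched by `F` plus the number
of edges outside `F`. -/
lemma key {V : Type*} [DecidableEq V] {ℓ : ℕ} {p q : Fin (ℓ + 1) → V}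
    (hp : Injective p) (hq : Injective q)
    {F : Finset (Sym2 V)} (hF : F ⊆ pathEdges p ∪ pathEdges q)
    {t : Fin ℓ} (hf : s(p t.castSucc, p t.succ) ∈ F)
    {u : V} (hup : u ∈ pathVerts p) (huq : u ∈ pathVerts q) :
    (pathVerts p ∪ pathVerts q).card ≤
      (edgeSupp F).card + ((pathEdges p ∪ pathEdges q) \ F).card := by
  have hl : 0 < ℓ := t.pos
  set W := pathVerts p ∪ pathVerts q with hW
  set S := edgeSupp F with hS
  have h1 : W.card ≤ (W \ S).card + S.card := card_le_card_sdiff_add_card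
  have h2 : (W \ S).card ≤ ((pathEdges p ∪ pathEdges q) \ F).card := by
    set b : Fin (ℓ + 1) := invFun q u with hb
    have hqb : q b = u := invFun_eq (mem_pathVerts_iff.mp huq)
    set φ : V → Sym2 V := fun v =>
      if v ∈ pathVerts p then
        s(p (stepIdx hl t.1 (invFun p v)).castSucc, p (stepIdx hl t.1 (invFun p v)).succ)
      else
        s(q (stepIdx hl b.1 (invFun q v)).castSucc, q (stepIdx hl b.1 (invFun q v)).succ)
      with hφ
    -- basic facts about points of `W \ S`
    have hWS : ∀ v ∈ W \ S, v ∈ W ∧ ∀ e ∈ F, v ∉ e := by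
      intro v hv
      rw [mem_sdiff] at hv
      refine ⟨hv.1, fun e he hve => hv.2 (mem_edgeSupp.mpr ⟨e, he, hve⟩)⟩
    have hhi : ∀ v, v ∈ W \ S → ¬ v ∈ pathVerts p →
        ((invFun q v : Fin (ℓ+1)).1 ≤ b.1 → (invFun q v : Fin (ℓ+1)).1 < ℓ) := by
      intro v hv hvp
      have hvq : v ∈ pathVerts q := by
        rcases mem_union.mp (hWS v hv).1 with h | h
        · exact absurd h hvp
        · exact h
      have hqv : q (invFun q v) = v := invFun_eq (mem_pathVerts_iff.mp hvq)
      have hne : (invFun q v : Fin (ℓ+1)) ≠ b := by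
        intro hcon
        apply hvp
        rw [← hqv, hcon, hqb]; exact hup
      have hne' : (invFun q v : Fin (ℓ+1)).1 ≠ b.1 := fun hc => hne (Fin.ext hc)
      have : b.1 ≤ ℓ := Nat.lt_succ_iff.mp b.2
      omega
    have hmemφ : ∀ v ∈ W \ S, v ∈ φ v := by
      intro v hv
      rw [hφ]
      by_cases hvp : v ∈ pathVerts p
      · simp only [hvp, if_pos]
        have hpv : p (invFun p v) = v := invFun_eq (mem_pathVerts_iff.mp hvp)
        have := step_mem (r := p) hl t.1 (invFun p v) (fun h => lt_of_le_of_lt h t.2)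
        rwa [hpv] at this
      · simp only [hvp, if_neg, if_false]
        have hvq : v ∈ pathVerts q := by
          rcases mem_union.mp (hWS v hv).1 with h | h
          · exact absurd h hvp
          · exact h
        have hqv : q (invFun q v) = v := invFun_eq (mem_pathVerts_iff.mp hvq)
        have := step_mem (r := q) hl b.1 (invFun q v) (hhi v hv hvp)
        rwa [hqv] at this
    have hnotF : ∀ v ∈ W \ S, φ v ∉ F := by
      intro v hv hcon
      exact (hWS v hv).2 _ hcon (hmemφ v hv)
    apply card_le_card_of_injOn φ
    · -- maps into
      intro v hv
      rw [mem_coe, mem_sdiff]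
      constructor
      · rw [hφ]
        by_cases hvp : v ∈ pathVerts p
        · simp only [hvp, if_pos]
          exact mem_union_left _ (mem_pathEdges_iff.mpr ⟨_, rfl⟩)
        · simp only [hvp, if_neg, if_false]
          exact mem_union_right _ (mem_pathEdges_iff.mpr ⟨_, rfl⟩)
      · exact hnotF v hv
    · -- injectivity
      intro v hv w hw hvw
      by_cases hvp : v ∈ pathVerts p <;> by_cases hwp : w ∈ pathVerts p
      · -- both on p
        have hpv : p (invFun p v) = v := invFun_eq (mem_pathVerts_iff.mp hvp)
        have hpw : p (invFun p w) = w := invFun_eq (mem_pathVerts_iff.mp hwp)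
        rw [hφ] at hvw
        simp only [hvp, hwp, if_pos] at hvw
        have hidx := edge_idx_inj hp hvw
        have hiv : (invFun p v : Fin (ℓ+1)).1 ≤ t.1 → (invFun p v : Fin (ℓ+1)).1 < ℓ :=
          fun h => lt_of_le_of_lt h t.2
        have hiw : (invFun p w : Fin (ℓ+1)).1 ≤ t.1 → (invFun p w : Fin (ℓ+1)).1 < ℓ :=
          fun h => lt_of_le_of_lt h t.2
        rcases stepIdx_inj hl t.1 hiv hiw (congrArg Fin.val hidx) with h | h | h
        · rw [← hpv, ← hpw, h]
        · -- v is the left endpoint of f : contradiction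
          exfalso
          apply (hWS v hv).2 _ hf
          have : (invFun p v : Fin (ℓ+1)) = t.castSucc := Fin.ext (by simpa using h)
          rw [← hpv, this]
          simp [Sym2.mem_iff]
        · exfalso
          apply (hWS w hw).2 _ hf
          have : (invFun p w : Fin (ℓ+1)) = t.castSucc := Fin.ext (by simpa using h)
          rw [← hpw, this]
          simp [Sym2.mem_iff]
      · -- v on p, w not on p : impossible since w ∈ φ w = φ v ∈ pathEdges p
        exfalso
        apply hwp
        have hmem : w ∈ φ v := hvw ▸ hmemφ w hw
        have : φ v ∈ pathEdges p := by
          rw [hφ]; simp only [hvp, if_pos]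
          exact mem_pathEdges_iff.mpr ⟨_, rfl⟩
        exact vert_of_mem_edge this hmem
      · exfalso
        apply hvp
        have hmem : v ∈ φ w := hvw ▸ hmemφ v hv
        have : φ w ∈ pathEdges p := by
          rw [hφ]; simp only [hwp, if_pos]
          exact mem_pathEdges_iff.mpr ⟨_, rfl⟩
        exact vert_of_mem_edge this hmem
      · -- both on q
        have hvq : v ∈ pathVerts q := by
          rcases mem_union.mp (hWS v hv).1 with h | h
          · exact absurd h hvp
          · exact h
        have hwq : w ∈ pathVerts q := by
          rcases mem_union.mp (hWS w hw).1 with h | h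
          · exact absurd h hwp
          · exact h
        have hqv : q (invFun q v) = v := invFun_eq (mem_pathVerts_iff.mp hvq)
        have hqw : q (invFun q w) = w := invFun_eq (mem_pathVerts_iff.mp hwq)
        rw [hφ] at hvw
        simp only [hvp, hwp, if_neg, if_false] at hvw
        have hidx := edge_idx_inj hq hvw
        have hiv := hhi v hv hvp
        have hiw := hhi w hw hwp
        rcases stepIdx_inj hl b.1 hiv hiw (congrArg Fin.val hidx) with h | h | h
        · rw [← hqv, ← hqw, h]
        · exfalso
          apply hvp
          have : (invFun q v : Fin (ℓ+1)) = b := Fin.ext h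
          rw [← hqv, this, hqb]; exact hup
        · exfalso
          apply hwp
          have : (invFun q w : Fin (ℓ+1)) = b := Fin.ext h
          rw [← hqw, this, hqb]; exact hup
  omega

end Helpers

/-- **Vertex-counting lemma for two pairs of paths.**
Let `π₁, π₂, π₃, π₄` be self-avoiding paths of length `ℓ` in a complete graph. If
`|E(π₃ ∪ π₄)| = 2ℓ − j`, `|E(π₁ ∪ π₂) ∩ E(π₃ ∪ π₄)| = j′` with `0 ≤ j ≤ ℓ`,
`1 ≤ j′ ≤ 2ℓ − j`, and the (vertex-wise and edge-wise) intersection `π₃ ∩ π₄` is nonempty,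
then `|V(π₃) ∩ V(π₄)| + |V(π₃ ∪ π₄) ∩ V(π₁ ∪ π₂)| ≥ j + j′ + 2`. -/
theorem vertex_count_of_path_pairs
    {V : Type*} [Fintype V] [DecidableEq V] {ℓ : ℕ}
    (π₁ π₂ π₃ π₄ : Fin (ℓ + 1) → V)
    (h₁ : Function.Injective π₁) (h₂ : Function.Injective π₂)
    (h₃ : Function.Injective π₃) (h₄ : Function.Injective π₄)
    (j j' : ℕ) (hj : j ≤ ℓ) (hj'₁ : 1 ≤ j') (hj'₂ : j' ≤ 2 * ℓ - j)
    (hE : (pathEdges π₃ ∪ pathEdges π₄).card = 2 * ℓ - j)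
    (hE' : ((pathEdges π₁ ∪ pathEdges π₂) ∩ (pathEdges π₃ ∪ pathEdges π₄)).card = j')
    (hne : (pathVerts π₃ ∩ pathVerts π₄).Nonempty) :
    j + j' + 2 ≤ (pathVerts π₃ ∩ pathVerts π₄).card +
      ((pathVerts π₃ ∪ pathVerts π₄) ∩ (pathVerts π₁ ∪ pathVerts π₂)).card := by
  set F := (pathEdges π₁ ∪ pathEdges π₂) ∩ (pathEdges π₃ ∪ pathEdges π₄) with hFdef
  obtain ⟨u, hu⟩ := hne
  rw [mem_inter] at hu
  have hFne : F.Nonempty := card_pos.mp (by rw [hE']; omega)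
  obtain ⟨f, hfF⟩ := hFne
  have hfE : f ∈ pathEdges π₃ ∪ pathEdges π₄ := (inter_subset_right hfF : _)
  have hkey : (pathVerts π₃ ∪ pathVerts π₄).card ≤
      (edgeSupp F).card + ((pathEdges π₃ ∪ pathEdges π₄) \ F).card := by
    rcases mem_union.mp hfE with hf3 | hf4
    · obtain ⟨t, ht⟩ := mem_pathEdges_iff.mp hf3
      exact key h₃ h₄ inter_subset_right (ht ▸ hfF) hu.1 hu.2
    · obtain ⟨t, ht⟩ := mem_pathEdges_iff.mp hf4
      have := key h₄ h₃ (F := F)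
        (by rw [union_comm]; exact inter_subset_right) (ht ▸ hfF) hu.2 hu.1
      rwa [union_comm (pathVerts π₄), union_comm (pathEdges π₄)] at this
  -- the support of F lies in both vertex unions
  have hsupp : edgeSupp F ⊆ (pathVerts π₃ ∪ pathVerts π₄) ∩ (pathVerts π₁ ∪ pathVerts π₂) := by
    intro v hv
    obtain ⟨e, heF, hve⟩ := mem_edgeSupp.mp hv
    rw [mem_inter]
    constructor
    · rcases mem_union.mp (inter_subset_right heF : e ∈ _) with h | h
      · exact mem_union_left _ (vert_of_mem_edge h hve)
      · exact mem_union_right _ (vert_of_mem_edge h hve)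
    · rcases mem_union.mp (inter_subset_left heF : e ∈ _) with h | h
      · exact mem_union_left _ (vert_of_mem_edge h hve)
      · exact mem_union_right _ (vert_of_mem_edge h hve)
  have hB : (edgeSupp F).card ≤
      ((pathVerts π₃ ∪ pathVerts π₄) ∩ (pathVerts π₁ ∪ pathVerts π₂)).card :=
    card_le_card hsupp
  have hDF : ((pathEdges π₃ ∪ pathEdges π₄) \ F).card + F.card
      = (pathEdges π₃ ∪ pathEdges π₄).card :=
    card_sdiff_add_card_eq_card inter_subset_right
  have hAU : (pathVerts π₃ ∩ pathVerts π₄).card + (pathVerts π₃ ∪ pathVerts π₄).card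
      = (pathVerts π₃).card + (pathVerts π₄).card := card_inter_add_card_union _ _
  have hV3 : (pathVerts π₃).card = ℓ + 1 := by
    rw [pathVerts, card_image_of_injective _ h₃, card_univ, Fintype.card_fin]
  have hV4 : (pathVerts π₄).card = ℓ + 1 := by
    rw [pathVerts, card_image_of_injective _ h₄, card_univ, Fintype.card_fin]
  omega
end
end

section
/- Let π and π′ be self-avoiding paths such that the graph π ∩ π′ (with edge set E(π) ∩ E(π′)) is nonempty and has exactly k + 1 connected components. Then there exists a set of k edges of π ∪ π′ whose removal (keeping the vertex set unchanged) leaves an acyclic graph. -/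
open Finset

noncomputable section

/-- The number of connected components of the intersection graph of two paths: the graph whose
vertex set is `V(π) ∩ V(π′)` and whose edge set is `E(π) ∩ E(π′)`. -/
def interComponents {V : Type*} [Fintype V] [DecidableEq V] {m m' : ℕ}
    (p : Fin (m + 1) → V) (q : Fin (m' + 1) → V) : ℕ :=
  Nat.card ((SimpleGraph.fromEdgeSet
      (↑(pathEdges p ∩ pathEdges q) : Set (Sym2 V))).induce
      (↑(pathVerts p ∩ pathVerts q) : Set V)).ConnectedComponent

open SimpleGraph

set_option linter.unusedSectionVars false
set_option maxHeartbeats 1000000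

section Helpers
variable {V : Type*}

lemma myIsAcyclic_anti {G H : SimpleGraph V} (hle : H ≤ G) (hG : G.IsAcyclic) : H.IsAcyclic := by
  intro v c hc
  exact hG (c.map (Hom.ofLE hle))
    (hc.map (by intro a b h; simpa using h))

/-- Claim C: decomposition of reachability after deleting one edge. -/
lemma reach_cases {G : SimpleGraph V} {u v : V} {w x : V}
    (h : G.Reachable w x) :
    (G \ fromEdgeSet {s(u,v)}).Reachable w x ∨
    ((G \ fromEdgeSet {s(u,v)}).Reachable w u ∧ (G \ fromEdgeSet {s(u,v)}).Reachable v x) ∨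
    ((G \ fromEdgeSet {s(u,v)}).Reachable w v ∧ (G \ fromEdgeSet {s(u,v)}).Reachable u x) := by
  set G' := G \ fromEdgeSet {s(u,v)} with hG'
  obtain ⟨W⟩ := h
  induction W with
  | nil => exact Or.inl (Reachable.refl _)
  | @cons w y x h W ih =>
    by_cases he : s(w, y) = s(u, v)
    · rw [Sym2.eq_iff] at he
      rcases he with ⟨rfl, rfl⟩ | ⟨rfl, rfl⟩
      · rcases ih with h1 | ⟨h1, h2⟩ | ⟨h1, h2⟩
        · exact Or.inr (Or.inl ⟨Reachable.refl _, h1⟩)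
        · exact Or.inr (Or.inl ⟨Reachable.refl _, h2⟩)
        · exact Or.inl h2
      · rcases ih with h1 | ⟨h1, h2⟩ | ⟨h1, h2⟩
        · exact Or.inr (Or.inr ⟨Reachable.refl _, h1⟩)
        · exact Or.inl h2
        · exact Or.inr (Or.inr ⟨Reachable.refl _, h2⟩)
    · have hadj : G'.Adj w y := by
        rw [hG', sdiff_adj, fromEdgeSet_adj]
        exact ⟨h, by tauto⟩
      rcases ih with h1 | ⟨h1, h2⟩ | ⟨h1, h2⟩
      · exact Or.inl (hadj.reachable.trans h1)
      · exact Or.inr (Or.inl ⟨hadj.reachable.trans h1, h2⟩)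
      · exact Or.inr (Or.inr ⟨hadj.reachable.trans h1, h2⟩)

lemma delete_bridge_comp [Fintype V] (G : SimpleGraph V) (u v : V) (hadj : G.Adj u v)
    (hbr : ¬ (G \ fromEdgeSet {s(u,v)}).Reachable u v) :
    Nat.card G.ConnectedComponent + 1 =
      Nat.card (G \ fromEdgeSet {s(u,v)}).ConnectedComponent := by
  classical
  set G' := G \ fromEdgeSet {s(u,v)} with hG'def
  let D : G'.ConnectedComponent → G'.ConnectedComponent :=
    fun c => if c = G'.connectedComponentMk v then G'.connectedComponentMk u else c
  have hDne : ∀ c, D c ≠ G'.connectedComponentMk v := by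
    intro c
    by_cases h : c = G'.connectedComponentMk v
    · simp only [D, h, if_pos rfl]
      intro hc
      exact hbr (ConnectedComponent.exact hc)
    · simp only [D, if_neg h]
      exact h
  have hDcompat : ∀ (w x : V) (p : G.Walk w x), p.IsPath →
      (⟨D (G'.connectedComponentMk w), hDne _⟩ :
        {c : G'.ConnectedComponent // c ≠ G'.connectedComponentMk v}) =
      ⟨D (G'.connectedComponentMk x), hDne _⟩ := by
    intro w x p _
    apply Subtype.ext
    rcases reach_cases (u := u) (v := v) ⟨p⟩ with h1 | ⟨h1, h2⟩ | ⟨h1, h2⟩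
    · rw [ConnectedComponent.sound h1]
    · -- w ~' u, v ~' x
      have hx : G'.connectedComponentMk x = G'.connectedComponentMk v :=
        ConnectedComponent.sound h2.symm
      have hw : G'.connectedComponentMk w ≠ G'.connectedComponentMk v := by
        intro h
        exact hbr (h1.symm.trans (ConnectedComponent.exact h))
      simp only [D, hx, if_pos rfl, if_neg hw]
      exact ConnectedComponent.sound h1
    · -- w ~' v, u ~' x
      have hw : G'.connectedComponentMk w = G'.connectedComponentMk v :=
        ConnectedComponent.sound h1
      have hx : G'.connectedComponentMk x ≠ G'.connectedComponentMk v := by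
        intro h
        exact hbr (h2.trans (ConnectedComponent.exact h))
      simp only [D, hw, if_pos rfl, if_neg hx]
      exact ConnectedComponent.sound h2
  let Φ : G.ConnectedComponent ≃ {c : G'.ConnectedComponent // c ≠ G'.connectedComponentMk v} :=
    { toFun := ConnectedComponent.lift
        (fun w => ⟨D (G'.connectedComponentMk w), hDne _⟩) hDcompat
      invFun := fun c => (c : G'.ConnectedComponent).map (Hom.ofLE sdiff_le)
      left_inv := by
        apply ConnectedComponent.ind
        intro w
        simp only [ConnectedComponent.lift_mk]
        by_cases h : G'.connectedComponentMk w = G'.connectedComponentMk v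
        · simp only [D, if_pos h, ConnectedComponent.map_mk]
          have : G'.Reachable w v := ConnectedComponent.exact h
          apply ConnectedComponent.sound
          exact ((this.mono sdiff_le).trans hadj.symm.reachable).symm
        · simp only [D, Hom.ofLE_apply, if_neg h, ConnectedComponent.map_mk]; rfl
      right_inv := by
        rintro ⟨c, hc⟩
        induction c using ConnectedComponent.ind with
        | _ w =>
          simp only [ConnectedComponent.map_mk, Hom.ofLE_apply]
          apply Subtype.ext
          simp only [ConnectedComponent.lift_mk, D]
          exact if_neg hc }
  haveI : Fintype G'.ConnectedComponent := Fintype.ofFinite _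
  haveI : Fintype G.ConnectedComponent := Fintype.ofFinite _
  have h1 : Nat.card G.ConnectedComponent =
      Fintype.card {c : G'.ConnectedComponent // c ≠ G'.connectedComponentMk v} := by
    rw [Nat.card_congr Φ, Nat.card_eq_fintype_card]
  have h2 : Fintype.card {c : G'.ConnectedComponent // c ≠ G'.connectedComponentMk v} =
      Fintype.card G'.ConnectedComponent -
        Fintype.card {c : G'.ConnectedComponent // c = G'.connectedComponentMk v} := by
    simpa using Fintype.card_subtype_compl (fun c => c = G'.connectedComponentMk v)
  have h3 : Fintype.card {c : G'.ConnectedComponent // c = G'.connectedComponentMk v} = 1 :=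
    Fintype.card_subtype_eq _
  have h4 : 0 < Fintype.card G'.ConnectedComponent := Fintype.card_pos_iff.mpr ⟨G'.connectedComponentMk v⟩
  simp only [Nat.card_eq_fintype_card] at h1 ⊢
  omega

lemma acyclic_card [Fintype V] (n : ℕ) :
    ∀ (G : SimpleGraph V), Nat.card G.edgeSet = n → G.IsAcyclic →
      Nat.card G.edgeSet + Nat.card G.ConnectedComponent = Fintype.card V := by
  induction n using Nat.strong_induction_on with
  | _ n ih =>
  intro G hn hG
  rcases Nat.eq_zero_or_pos n with rfl | hpos
  · have hemp : G.edgeSet = ∅ := by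
      rcases Nat.card_eq_zero.mp hn with h | h
      · exact Set.isEmpty_coe_sort.mp h
      · exact absurd (Set.toFinite G.edgeSet).to_subtype h.not_finite
    have hbot : G = ⊥ := SimpleGraph.edgeSet_eq_empty.mp hemp
    subst hbot
    have e : (⊥ : SimpleGraph V).ConnectedComponent ≃ V :=
      { toFun := ConnectedComponent.lift id (fun a b p _ => by
          cases p with
          | nil => rfl
          | cons h _ => exact absurd h (by simp))
        invFun := (⊥ : SimpleGraph V).connectedComponentMk
        left_inv := by apply ConnectedComponent.ind; intro w; rfl
        right_inv := fun v => rfl }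
    rw [hn, Nat.card_congr e, Nat.card_eq_fintype_card]
    omega
  · have hne : ∃ e, e ∈ G.edgeSet := by
      have : 0 < Nat.card G.edgeSet := hn ▸ hpos
      obtain ⟨⟨e, he⟩⟩ := (Nat.card_pos_iff.mp this).1
      exact ⟨e, he⟩
    obtain ⟨e, he⟩ := hne
    revert he
    induction e using Sym2.ind with
    | _ u v =>
    intro he
    have hadj : G.Adj u v := he
    set G' := G \ fromEdgeSet {s(u,v)} with hG'def
    have hle : G' ≤ G := sdiff_le
    have hG' : G'.IsAcyclic := myIsAcyclic_anti hle hG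
    have hbr : ¬ G'.Reachable u v :=
      isBridge_iff.mp (isAcyclic_iff_forall_adj_isBridge.mp hG hadj)
    have hES : G'.edgeSet = G.edgeSet \ {s(u,v)} := by
      rw [hG'def, edgeSet_sdiff, edgeSet_fromEdgeSet]
      congr 1
      ext f
      simp only [Set.mem_diff, Set.mem_singleton_iff, Set.mem_setOf_eq, and_iff_left_iff_imp]
      rintro rfl
      simp [hadj.ne]
    have hcard' : Nat.card G'.edgeSet = n - 1 := by
      rw [Nat.card_coe_set_eq, hES, Set.ncard_diff_singleton_of_mem he,
        ← Nat.card_coe_set_eq, hn]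
    have key := delete_bridge_comp G u v hadj hbr
    rw [← hG'def] at key
    have ihh := ih (n-1) (by omega) G' hcard' hG'
    rw [hcard'] at ihh
    rw [hn]
    omega

lemma delete_nonbridge_reach {G : SimpleGraph V} {u v : V}
    (hre : (G \ fromEdgeSet {s(u,v)}).Reachable u v) {w x : V} (h : G.Reachable w x) :
    (G \ fromEdgeSet {s(u,v)}).Reachable w x := by
  rcases reach_cases (u := u) (v := v) h with h1 | ⟨h1, h2⟩ | ⟨h1, h2⟩
  · exact h1
  · exact (h1.trans hre).trans h2
  · exact (h1.trans hre.symm).trans h2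

lemma exists_spanning_forest [Fintype V] (n : ℕ) :
    ∀ (G : SimpleGraph V), Nat.card G.edgeSet = n →
      ∃ H, H ≤ G ∧ H.IsAcyclic ∧ ∀ w x : V, H.Reachable w x ↔ G.Reachable w x := by
  induction n using Nat.strong_induction_on with
  | _ n ih =>
  intro G hn
  by_cases hG : G.IsAcyclic
  · exact ⟨G, le_refl _, hG, fun _ _ => Iff.rfl⟩
  · rw [IsAcyclic] at hG
    push_neg at hG
    obtain ⟨v0, c, hc⟩ := hG
    have hlen : c.edges ≠ [] := by
      have h3 := hc.three_le_length
      intro h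
      rw [← SimpleGraph.Walk.length_edges, h] at h3
      simp at h3
    obtain ⟨e, he⟩ := List.exists_mem_of_ne_nil _ hlen
    revert he
    induction e using Sym2.ind with
    | _ a b =>
    intro he
    have heG : s(a,b) ∈ G.edgeSet := c.edges_subset_edgeSet he
    have hre : (G \ fromEdgeSet {s(a,b)}).Reachable a b :=
      (adj_and_reachable_delete_edges_iff_exists_cycle.mpr ⟨v0, c, hc, he⟩).2
    set G' := G \ fromEdgeSet {s(a,b)} with hG'def
    have hadj : G.Adj a b := heG
    have hES : G'.edgeSet = G.edgeSet \ {s(a,b)} := by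
      rw [hG'def, edgeSet_sdiff, edgeSet_fromEdgeSet]
      congr 1
      ext f
      simp only [Set.mem_diff, Set.mem_singleton_iff, Set.mem_setOf_eq, and_iff_left_iff_imp]
      rintro rfl
      simp [hadj.ne]
    have hpos : 0 < n := by
      rw [← hn]
      exact Nat.card_pos_iff.mpr ⟨⟨⟨s(a,b), heG⟩⟩, (Set.toFinite G.edgeSet).to_subtype⟩
    have hcard' : Nat.card G'.edgeSet = n - 1 := by
      rw [Nat.card_coe_set_eq, hES, Set.ncard_diff_singleton_of_mem heG,
        ← Nat.card_coe_set_eq, hn]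
    obtain ⟨H, hH1, hH2, hH3⟩ := ih (n-1) (by omega) G' hcard'
    refine ⟨H, hH1.trans sdiff_le, hH2, fun w x => ⟨fun h => ((hH3 w x).mp h).mono sdiff_le,
      fun h => (hH3 w x).mpr (delete_nonbridge_reach hre h)⟩⟩

def comp_equiv_of_reach {G H : SimpleGraph V}
    (h : ∀ w x : V, H.Reachable w x ↔ G.Reachable w x) :
    H.ConnectedComponent ≃ G.ConnectedComponent :=
  { toFun := ConnectedComponent.lift G.connectedComponentMk
      (fun v w p _ => ConnectedComponent.sound ((h v w).mp ⟨p⟩))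
    invFun := ConnectedComponent.lift H.connectedComponentMk
      (fun v w p _ => ConnectedComponent.sound ((h v w).mpr ⟨p⟩))
    left_inv := by apply ConnectedComponent.ind; intro w; rfl
    right_inv := by apply ConnectedComponent.ind; intro w; rfl }

lemma comp_count_isolated [Fintype V] (G : SimpleGraph V) (A : Finset V) (x0 : V) (hx0 : x0 ∈ A)
    (hA : ∀ v w : V, G.Adj v w → v ∈ A ∧ w ∈ A)
    (hconn : ∀ v ∈ A, G.Reachable v x0) :
    Nat.card G.ConnectedComponent + A.card = Fintype.card V + 1 := by
  classical
  let f : V → Option {v : V // v ∉ A} := fun v => if h : v ∈ A then none else some ⟨v, h⟩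
  have hf : ∀ (v w : V) (W : G.Walk v w), f v = f w := by
    intro v w W
    induction W with
    | nil => rfl
    | @cons v y w h W ih =>
      have hv := (hA v y h).1
      have hy := (hA v y h).2
      rw [← ih]
      simp [f, hv, hy]
  let Φ : G.ConnectedComponent ≃ Option {v : V // v ∉ A} :=
    { toFun := ConnectedComponent.lift f (fun v w W _ => hf v w W)
      invFun := fun o => match o with
        | none => G.connectedComponentMk x0
        | some ⟨v, _⟩ => G.connectedComponentMk v
      left_inv := by
        apply ConnectedComponent.ind
        intro w
        simp only [ConnectedComponent.lift_mk]
        by_cases h : w ∈ A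
        · simp only [f, dif_pos h]
          exact ConnectedComponent.sound (hconn w h).symm
        · simp only [f, dif_neg h]
      right_inv := by
        rintro (_ | ⟨v, hv⟩)
        · simp only [ConnectedComponent.lift_mk, f, dif_pos hx0]
        · simp only [ConnectedComponent.lift_mk, f, dif_neg hv] }
  rw [Nat.card_congr Φ]
  haveI : Fintype {v : V // v ∉ A} := Fintype.ofFinite _
  rw [Nat.card_eq_fintype_card, Fintype.card_option]
  have h1 : Fintype.card {v : V // v ∉ A} = Fintype.card V - Fintype.card {v : V // v ∈ A} := by
    simpa using Fintype.card_subtype_compl (fun v => v ∈ A)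
  have h2 : Fintype.card {v : V // v ∈ A} = A.card := Fintype.card_coe A
  have h3 : A.card ≤ Fintype.card V := A.card_le_univ
  omega

lemma induce_acyclic {G : SimpleGraph V} (h : G.IsAcyclic) (s : Set V) :
    (G.induce s).IsAcyclic := by
  intro v c hc
  exact h (c.map ⟨Subtype.val, fun ha => ha⟩) (hc.map Subtype.val_injective)

lemma induce_edge_card [Fintype V] [DecidableEq V] (E : Finset (Sym2 V)) (I : Finset V)
    (hnd : ∀ e ∈ E, ¬ e.IsDiag) (hsub : ∀ e ∈ E, ∀ x ∈ e, x ∈ I) :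
    Nat.card ((fromEdgeSet (↑E : Set (Sym2 V))).induce (↑I : Set V)).edgeSet = E.card := by
  classical
  set Gi := (fromEdgeSet (↑E : Set (Sym2 V))).induce (↑I : Set V) with hGi
  let g : Gi.edgeSet → (↑E : Set (Sym2 V)) := fun x =>
    ⟨x.1.map Subtype.val, by
      obtain ⟨e, he⟩ := x
      induction e using Sym2.ind with
      | _ a b =>
        have : Gi.Adj a b := he
        have h2 : (fromEdgeSet (↑E : Set (Sym2 V))).Adj a.1 b.1 := this
        rw [fromEdgeSet_adj] at h2
        simpa using h2.1⟩
  have hginj : Function.Injective g := by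
    rintro ⟨e1, h1⟩ ⟨e2, h2⟩ h
    have := Sym2.map.injective Subtype.val_injective (Subtype.mk_eq_mk.mp h)
    exact Subtype.ext this
  have hgsurj : Function.Surjective g := by
    rintro ⟨e, he⟩
    induction e using Sym2.ind with
    | _ a b =>
      have heE : s(a, b) ∈ E := he
      have ha : a ∈ I := hsub _ heE a (by simp)
      have hb : b ∈ I := hsub _ heE b (by simp)
      have hab : a ≠ b := by
        intro h; apply hnd _ heE; rw [h]; exact Sym2.mk_isDiag_iff.mpr rfl
      refine ⟨⟨s((⟨a, ha⟩ : (↑I : Set V)), (⟨b, hb⟩ : (↑I : Set V))), ?_⟩, ?_⟩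
      · show Gi.Adj _ _
        show (fromEdgeSet (↑E : Set (Sym2 V))).Adj a b
        rw [fromEdgeSet_adj]
        exact ⟨heE, hab⟩
      · apply Subtype.ext
        simp [g]
  rw [Nat.card_congr (Equiv.ofBijective g ⟨hginj, hgsurj⟩), Nat.card_coe_set_eq,
    Set.ncard_coe_finset]

end Helpers

section PathHelpers
variable {V : Type*} [DecidableEq V] {m : ℕ} {p : Fin (m + 1) → V}


lemma edgeFun_injective (hp : Function.Injective p) :
    Function.Injective (fun i : Fin m => s(p i.castSucc, p i.succ)) := by
  intro a b hab
  simp only [Sym2.eq_iff] at hab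
  rcases hab with ⟨h1, _⟩ | ⟨h1, h2⟩
  · have := hp h1
    exact Fin.castSucc_inj.mp this
  · have e1 := hp h1
    have e2 := hp h2
    have v1 : (a : ℕ) = (b : ℕ) + 1 := by
      have := congrArg Fin.val e1; simpa using this
    have v2 : (a : ℕ) + 1 = (b : ℕ) := by
      have := congrArg Fin.val e2; simpa using this
    omega

lemma card_pathEdges (hp : Function.Injective p) : (pathEdges p).card = m := by
  rw [pathEdges, Finset.card_image_of_injective _ (edgeFun_injective hp), Finset.card_univ,
    Fintype.card_fin]

lemma card_pathVerts (hp : Function.Injective p) : (pathVerts p).card = m + 1 := by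
  rw [pathVerts, Finset.card_image_of_injective _ hp, Finset.card_univ, Fintype.card_fin]

lemma mem_pathVerts_of_mem_pathEdges {e : Sym2 V} (he : e ∈ pathEdges p) {x : V}
    (hx : x ∈ e) : x ∈ pathVerts p := by
  rw [pathEdges, Finset.mem_image] at he
  obtain ⟨i, -, rfl⟩ := he
  rw [Sym2.mem_iff] at hx
  rcases hx with rfl | rfl <;> exact Finset.mem_image_of_mem p (Finset.mem_univ _)

lemma pathEdges_not_isDiag (hp : Function.Injective p) {e : Sym2 V} (he : e ∈ pathEdges p) :
    ¬ e.IsDiag := by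
  rw [pathEdges, Finset.mem_image] at he
  obtain ⟨i, -, rfl⟩ := he
  rw [Sym2.mk_isDiag_iff]
  intro h
  have := hp h
  have := congrArg Fin.val this
  simp at this

lemma pathGraph_adj (hp : Function.Injective p) (i : Fin m) :
    (fromEdgeSet (↑(pathEdges p) : Set (Sym2 V))).Adj (p i.castSucc) (p i.succ) := by
  rw [fromEdgeSet_adj]
  refine ⟨Finset.mem_coe.mpr (Finset.mem_image_of_mem _ (Finset.mem_univ i)), fun h => ?_⟩
  have := congrArg Fin.val (hp h)
  simp at this

lemma pathGraph_reachable (hp : Function.Injective p) (i j : Fin (m + 1)) :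
    (fromEdgeSet (↑(pathEdges p) : Set (Sym2 V))).Reachable (p i) (p j) := by
  suffices h : ∀ i : Fin (m + 1),
      (fromEdgeSet (↑(pathEdges p) : Set (Sym2 V))).Reachable (p 0) (p i) by
    exact (h i).symm.trans (h j)
  intro i
  induction i using Fin.induction with
  | zero => exact Reachable.refl _
  | succ i ih => exact ih.trans (pathGraph_adj hp i).reachable

lemma exists_edge_incident {G : SimpleGraph V} {x v : V} (q : G.Walk x v) (hxv : x ≠ v) :
    ∃ e ∈ q.edges, v ∈ e := by
  induction q with
  | nil => exact absurd rfl hxv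
  | @cons x y v h r ih =>
    by_cases hyv : y = v
    · subst hyv
      exact ⟨s(x, y), by simp, by simp⟩
    · obtain ⟨e, he, hve⟩ := ih hyv
      exact ⟨e, by simp [he], hve⟩

lemma pathGraph_acyclic (hp : Function.Injective p) :
    (fromEdgeSet (↑(pathEdges p) : Set (Sym2 V))).IsAcyclic := by
  classical
  set P := fromEdgeSet (↑(pathEdges p) : Set (Sym2 V)) with hPdef
  intro v0 c hc
  have hedge : ∀ e ∈ c.edges, e ∈ pathEdges p := by
    intro e he
    have := c.edges_subset_edgeSet he
    rw [hPdef, edgeSet_fromEdgeSet] at this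
    exact this.1
  set S : Finset (Fin m) :=
    Finset.univ.filter (fun i : Fin m => s(p i.castSucc, p i.succ) ∈ c.edges) with hSdef
  have hSne : S.Nonempty := by
    have hlen : c.edges ≠ [] := by
      have h3 := hc.three_le_length
      intro h
      rw [← SimpleGraph.Walk.length_edges, h] at h3
      simp at h3
    obtain ⟨e, he⟩ := List.exists_mem_of_ne_nil _ hlen
    have := hedge e he
    rw [pathEdges, Finset.mem_image] at this
    obtain ⟨i, -, rfl⟩ := this
    exact ⟨i, by simp [hSdef, he]⟩
  set i := S.max' hSne with hidef
  have hiS : i ∈ S := S.max'_mem hSne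
  have hie : s(p i.castSucc, p i.succ) ∈ c.edges := by
    rw [hSdef] at hiS; simpa using hiS
  set v := p i.succ with hvdef
  have hv : v ∈ c.support := Walk.snd_mem_support_of_mem_edges c hie
  set c' := c.rotate v hv with hc'def
  have hc' : c'.IsCycle := hc.rotate hv
  have hmemiff : ∀ e, e ∈ c'.edges ↔ e ∈ c.edges := fun e => (c.rotate_edges v hv).mem_iff
  -- key: any edge of c incident to v must be the i-th path edge
  have hkey : ∀ e ∈ c'.edges, v ∈ e → e = s(p i.castSucc, p i.succ) := by
    intro e he hve
    have heP := hedge e ((hmemiff e).mp he)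
    rw [pathEdges, Finset.mem_image] at heP
    obtain ⟨j, -, rfl⟩ := heP
    have hjS : j ∈ S := by rw [hSdef]; simp [(hmemiff _).mp he]
    have hji : (j : ℕ) ≤ (i : ℕ) := S.le_max' j hjS
    rw [Sym2.mem_iff] at hve
    rcases hve with hv1 | hv1
    · -- p i.succ = p j.castSucc
      have := congrArg Fin.val (hp hv1)
      simp at this
      omega
    · have := hp hv1
      have : j = i := Fin.succ_injective _ this.symm
      rw [this]
  -- decompose c'
  obtain ⟨y, h, q, hcc⟩ := Walk.not_nil_iff.mp hc'.isCircuit.not_nil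
  have hyv : y ≠ v := h.ne'
  have he1 : s(v, y) ∈ c'.edges := by rw [hcc]; simp
  obtain ⟨e2, he2q, hve2⟩ := exists_edge_incident q hyv
  have he2 : e2 ∈ c'.edges := by rw [hcc, Walk.edges_cons]; exact List.mem_cons_of_mem _ he2q
  have hnd := hc'.edges_nodup
  have hne12 : s(v, y) ∉ q.edges := by
    rw [hcc, Walk.edges_cons, List.nodup_cons] at hnd
    exact hnd.1
  have k1 := hkey _ he1 (by simp)
  have k2 := hkey _ he2 hve2
  rw [← k2] at k1
  exact hne12 (k1 ▸ he2q)

end PathHelpers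

/-- **Making the union of two paths acyclic by deleting few edges.**
Let `π, π′` be self-avoiding paths whose (vertex-wise and edge-wise) intersection is nonempty
and has exactly `k + 1` connected components. Then there is a set of `k` edges of `π ∪ π′`
whose removal (keeping the vertex set unchanged) leaves an acyclic graph. -/
theorem union_of_paths_acyclic_after_removing_edges
    {V : Type*} [Fintype V] [DecidableEq V] {m m' : ℕ}
    (p : Fin (m + 1) → V) (q : Fin (m' + 1) → V)
    (hp : Function.Injective p) (hq : Function.Injective q)
    (hne : (pathVerts p ∩ pathVerts q).Nonempty)
    (k : ℕ) (hcomp : interComponents p q = k + 1) :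
    ∃ F : Finset (Sym2 V), F ⊆ pathEdges p ∪ pathEdges q ∧ F.card = k ∧
      (SimpleGraph.fromEdgeSet
        ((↑(pathEdges p ∪ pathEdges q) : Set (Sym2 V)) \ ↑F)).IsAcyclic := by
  classical
  obtain ⟨x0, hx0⟩ := hne
  have hx0P : x0 ∈ pathVerts p := (Finset.mem_inter.mp hx0).1
  have hx0Q : x0 ∈ pathVerts q := (Finset.mem_inter.mp hx0).2
  set G := SimpleGraph.fromEdgeSet (↑(pathEdges p ∪ pathEdges q) : Set (Sym2 V)) with hGdef
  have hPle : SimpleGraph.fromEdgeSet (↑(pathEdges p) : Set (Sym2 V)) ≤ G := by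
    rw [hGdef]
    exact fromEdgeSet_mono (by exact_mod_cast (Finset.subset_union_left :
      pathEdges p ⊆ pathEdges p ∪ pathEdges q))
  have hQle : SimpleGraph.fromEdgeSet (↑(pathEdges q) : Set (Sym2 V)) ≤ G := by
    rw [hGdef]
    exact fromEdgeSet_mono (by exact_mod_cast (Finset.subset_union_right :
      pathEdges q ⊆ pathEdges p ∪ pathEdges q))
  -- all vertices in the union of the two paths are reachable from x0
  have hconn : ∀ v ∈ pathVerts p ∪ pathVerts q, G.Reachable v x0 := by
    intro v hv
    rw [Finset.mem_union] at hv
    rcases hv with hv | hv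
    · obtain ⟨i0, -, hi0⟩ := Finset.mem_image.mp hx0P
      obtain ⟨i, -, hi⟩ := Finset.mem_image.mp hv
      rw [← hi0, ← hi]
      exact (pathGraph_reachable hp i i0).mono hPle
    · obtain ⟨j0, -, hj0⟩ := Finset.mem_image.mp hx0Q
      obtain ⟨j, -, hj⟩ := Finset.mem_image.mp hv
      rw [← hj0, ← hj]
      exact (pathGraph_reachable hq j j0).mono hQle
  have hAadj : ∀ v w : V, G.Adj v w → v ∈ pathVerts p ∪ pathVerts q ∧
      w ∈ pathVerts p ∪ pathVerts q := by
    intro v w h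
    rw [hGdef, fromEdgeSet_adj] at h
    have hS : s(v, w) ∈ pathEdges p ∪ pathEdges q := by exact_mod_cast h.1
    rw [Finset.mem_union] at hS
    rcases hS with hS | hS
    · exact ⟨Finset.mem_union_left _ (mem_pathVerts_of_mem_pathEdges hS (by simp)),
        Finset.mem_union_left _ (mem_pathVerts_of_mem_pathEdges hS (by simp))⟩
    · exact ⟨Finset.mem_union_right _ (mem_pathVerts_of_mem_pathEdges hS (by simp)),
        Finset.mem_union_right _ (mem_pathVerts_of_mem_pathEdges hS (by simp))⟩
  have step2 := comp_count_isolated G (pathVerts p ∪ pathVerts q) x0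
    (Finset.mem_union_left _ hx0P) hAadj hconn
  -- the intersection graph
  have hGi_acyclic : ((SimpleGraph.fromEdgeSet
      (↑(pathEdges p ∩ pathEdges q) : Set (Sym2 V))).induce
      (↑(pathVerts p ∩ pathVerts q) : Set V)).IsAcyclic := by
    apply induce_acyclic
    apply myIsAcyclic_anti _ (pathGraph_acyclic hp)
    exact fromEdgeSet_mono (by exact_mod_cast (Finset.inter_subset_left :
      pathEdges p ∩ pathEdges q ⊆ pathEdges p))
  have hIcard : Nat.card ((SimpleGraph.fromEdgeSet
      (↑(pathEdges p ∩ pathEdges q) : Set (Sym2 V))).induce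
      (↑(pathVerts p ∩ pathVerts q) : Set V)).edgeSet = (pathEdges p ∩ pathEdges q).card := by
    apply induce_edge_card
    · intro e he
      exact pathEdges_not_isDiag hp (Finset.mem_inter.mp he).1
    · intro e he x hx
      exact Finset.mem_inter.mpr
        ⟨mem_pathVerts_of_mem_pathEdges (Finset.mem_inter.mp he).1 hx,
         mem_pathVerts_of_mem_pathEdges (Finset.mem_inter.mp he).2 hx⟩
  have step3 : (pathEdges p ∩ pathEdges q).card + (k + 1) =
      (pathVerts p ∩ pathVerts q).card := by
    have h := acyclic_card _ ((SimpleGraph.fromEdgeSet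
      (↑(pathEdges p ∩ pathEdges q) : Set (Sym2 V))).induce
      (↑(pathVerts p ∩ pathVerts q) : Set V)) rfl hGi_acyclic
    have hcomp' : Nat.card ((SimpleGraph.fromEdgeSet
      (↑(pathEdges p ∩ pathEdges q) : Set (Sym2 V))).induce
      (↑(pathVerts p ∩ pathVerts q) : Set V)).ConnectedComponent = k + 1 := hcomp
    rw [hIcard, hcomp', ← Nat.card_eq_fintype_card, Nat.card_coe_set_eq,
      Set.ncard_coe_finset] at h
    exact h
  -- spanning forest of G
  obtain ⟨H, hH1, hH2, hH3⟩ := exists_spanning_forest _ G rfl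
  have hHcount := acyclic_card _ H rfl hH2
  have hHcomp : Nat.card H.ConnectedComponent = Nat.card G.ConnectedComponent :=
    Nat.card_congr (comp_equiv_of_reach hH3)
  have hTS : H.edgeSet.toFinset ⊆ pathEdges p ∪ pathEdges q := by
    intro e he
    rw [Set.mem_toFinset] at he
    have heG : e ∈ G.edgeSet := edgeSet_subset_edgeSet.mpr hH1 he
    rw [hGdef, edgeSet_fromEdgeSet] at heG
    exact_mod_cast heG.1
  have hTcard : Nat.card H.edgeSet = H.edgeSet.toFinset.card := by
    rw [Nat.card_coe_set_eq, Set.ncard_eq_toFinset_card']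
  refine ⟨(pathEdges p ∪ pathEdges q) \ H.edgeSet.toFinset, Finset.sdiff_subset, ?_, ?_⟩
  · rw [Finset.card_sdiff_of_subset hTS]
    have hScard : (pathEdges p ∪ pathEdges q).card + (pathEdges p ∩ pathEdges q).card
        = m + m' := by
      rw [Finset.card_union_add_card_inter, card_pathEdges hp, card_pathEdges hq]
    have hAcard : (pathVerts p ∪ pathVerts q).card + (pathVerts p ∩ pathVerts q).card
        = (m + 1) + (m' + 1) := by
      rw [Finset.card_union_add_card_inter, card_pathVerts hp, card_pathVerts hq]
    rw [hTcard, hHcomp] at hHcount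
    have hTle : H.edgeSet.toFinset.card ≤ (pathEdges p ∪ pathEdges q).card :=
      Finset.card_le_card hTS
    omega
  · have hcoe : (↑(pathEdges p ∪ pathEdges q) : Set (Sym2 V)) \
        ↑((pathEdges p ∪ pathEdges q) \ H.edgeSet.toFinset) = ↑H.edgeSet.toFinset := by
      rw [← Finset.coe_sdiff, Finset.sdiff_sdiff_self_left,
        Finset.inter_eq_right.mpr hTS]
    rw [hcoe, Set.coe_toFinset, fromEdgeSet_edgeSet]
    exact hH2
end
end
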